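/- arXiv:math-ph/0311024 — 3 statements merged into one kernel-verified Lean document; each statement's English description precedes it below -/
import Mathlib

section
/- Fix an integer d ≥ 1. Let A ⊆ ℝ^d be compact with H_d(A) > 0. Then there exists a constant C > 0 (depending on A and d) such that for every N ≥ 2 and every N-point configuration ω*_N = {x_1,…,x_N} ⊆ A attaining the minimal d-energy (i.e., E_d(ω*_N) = ℰ_d(A,N)), one has min_{i≠j} |x_i − x_j| ≥ C · (N log N)^{−1/d}. -/
open scoped ENNReal NNReal BigOperators Classical
open MeasureTheory Filter Metric Set Topology

/-- The Riesz `s`-energy of a finite configuration `ω`, valued in `[0,∞]`. -/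
noncomputable def rieszEnergy {E : Type*} [PseudoEMetricSpace E] (s : ℝ) (ω : Finset E) : ℝ≥0∞ :=
  ∑ x ∈ ω, ∑ y ∈ ω, if x = y then 0 else edist x y ^ (-s)

/-- The `N`-point minimal Riesz `s`-energy over a set `A` (infimum over all `N`-point
subsets of `A`; `∞` if there is none). -/
noncomputable def minRieszEnergy {E : Type*} [PseudoEMetricSpace E] (s : ℝ) (A : Set E)
    (N : ℕ) : ℝ≥0∞ :=
  ⨅ (ω : Finset E) (_ : ↑ω ⊆ A) (_ : ω.card = N), rieszEnergy s ω

lemma rieszEnergy_insert {E : Type*} [PseudoEMetricSpace E] (s : ℝ) {a : E} {T : Finset E}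
    (ha : a ∉ T) :
    rieszEnergy s (insert a T) = rieszEnergy s T + 2 * ∑ z ∈ T, edist a z ^ (-s) := by
  classical
  unfold rieszEnergy
  rw [Finset.sum_insert ha]
  have h1 : ∑ y ∈ insert a T, (if a = y then 0 else edist a y ^ (-s))
      = ∑ z ∈ T, edist a z ^ (-s) := by
    rw [Finset.sum_insert ha, if_pos rfl, zero_add]
    refine Finset.sum_congr rfl fun z hz => ?_
    rw [if_neg (by rintro rfl; exact ha hz)]
  have h2 : ∀ x ∈ T, ∑ y ∈ insert a T, (if x = y then 0 else edist x y ^ (-s))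
      = edist a x ^ (-s) + ∑ y ∈ T, (if x = y then 0 else edist x y ^ (-s)) := by
    intro x hx
    rw [Finset.sum_insert ha, if_neg (by rintro rfl; exact ha hx), edist_comm]
  rw [h1, Finset.sum_congr rfl h2, Finset.sum_add_distrib]
  ring

lemma rieszEnergy_lt_top {E : Type*} [MetricSpace E] {s : ℝ} (T : Finset E) :
    rieszEnergy s T < ⊤ := by
  unfold rieszEnergy
  refine ENNReal.sum_lt_top.2 fun x _ => ENNReal.sum_lt_top.2 fun y _ => ?_
  split_ifs with h
  · exact ENNReal.zero_lt_top
  · rw [ENNReal.rpow_neg]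
    exact ENNReal.inv_lt_top.2 (ENNReal.rpow_pos (edist_pos.2 h) (edist_ne_top x y))

lemma variational {E : Type*} [MetricSpace E] {s : ℝ} {A : Set E} {N : ℕ} {ω : Finset E}
    (hsub : ↑ω ⊆ A) (hcard : ω.card = N)
    (hopt : rieszEnergy s ω = minRieszEnergy s A N)
    {x : E} (hx : x ∈ ω) {p : E} (hp : p ∈ A) (hpT : p ∉ ω.erase x) :
    ∑ z ∈ ω.erase x, edist x z ^ (-s) ≤ ∑ z ∈ ω.erase x, edist p z ^ (-s) := by
  classical
  rcases eq_or_ne p x with rfl | hpx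
  · exact le_rfl
  set T := ω.erase x with hT
  have hxT : x ∉ T := Finset.notMem_erase x ω
  have hωT : ω = insert x T := (Finset.insert_erase hx).symm
  have hcard' : (insert p T).card = N := by
    rw [Finset.card_insert_of_notMem hpT, Finset.card_erase_of_mem hx, hcard]
    have : 1 ≤ N := hcard ▸ Finset.card_pos.2 ⟨x, hx⟩
    omega
  have hsub' : ↑(insert p T) ⊆ A := by
    intro z hz
    simp only [Finset.coe_insert, Set.mem_insert_iff] at hz
    rcases hz with rfl | hz
    · exact hp
    · exact hsub (Finset.mem_coe.2 (Finset.erase_subset x ω hz))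
  have hmin : minRieszEnergy s A N ≤ rieszEnergy s (insert p T) := by
    refine iInf_le_of_le (insert p T) ?_
    exact iInf_le_of_le hsub' (iInf_le_of_le hcard' le_rfl)
  have hchain : rieszEnergy s T + 2 * ∑ z ∈ T, edist x z ^ (-s)
      ≤ rieszEnergy s T + 2 * ∑ z ∈ T, edist p z ^ (-s) := by
    rw [← rieszEnergy_insert s hxT, ← rieszEnergy_insert s hpT, ← hωT]
    exact hopt.le.trans hmin
  have hTne : rieszEnergy s T ≠ ⊤ := (rieszEnergy_lt_top T).ne
  rw [ENNReal.add_le_add_iff_left hTne] at hchain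
  exact (ENNReal.mul_le_mul_iff_right (by norm_num) (by norm_num)).1 hchain

lemma kernel_pointwise {d : ℕ} (z p : EuclideanSpace ℝ (Fin d)) {ε D : ℝ} (hε : 0 < ε)
    (h1 : ε ≤ dist p z) (h2 : dist p z ≤ D) :
    edist p z ^ (-(d:ℝ)) ≤ ∑ j ∈ Finset.range (Nat.log 2 ⌊D/ε⌋₊ + 1),
      (closedBall z (2^(j+1)*ε)).indicator
        (fun _ => (ENNReal.ofReal (2^j*ε))^(-(d:ℝ))) p := by
  classical
  set K := Nat.log 2 ⌊D/ε⌋₊ with hK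
  set n := ⌊dist p z / ε⌋₊ with hn
  set j := Nat.log 2 n with hj
  have hn1 : 1 ≤ n := Nat.le_floor (by rw [le_div_iff₀ hε]; simpa using h1)
  have hnle : (n : ℝ) ≤ dist p z / ε := Nat.floor_le (by positivity)
  have h2j : (2:ℝ)^j * ε ≤ dist p z := by
    have : ((2^j : ℕ) : ℝ) ≤ (n:ℝ) := by exact_mod_cast Nat.pow_log_le_self 2 (by omega)
    have h' : (2:ℝ)^j ≤ dist p z / ε := le_trans (by push_cast at this ⊢; linarith) hnle
    calc (2:ℝ)^j * ε ≤ (dist p z / ε) * ε := by nlinarith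
    _ = dist p z := by field_simp
  have hlt : dist p z < 2^(j+1) * ε := by
    have hfl : dist p z / ε < (n:ℝ) + 1 := Nat.lt_floor_add_one _
    have h2 : (n:ℝ) + 1 ≤ (2:ℝ)^(j+1) := by
      have := Nat.lt_pow_succ_log_self (by norm_num : 1 < 2) n
      exact_mod_cast Nat.succ_le_of_lt this
    have : dist p z / ε < (2:ℝ)^(j+1) := lt_of_lt_of_le hfl h2
    calc dist p z = (dist p z / ε) * ε := by field_simp
    _ < 2^(j+1) * ε := by nlinarith
  have hjK : j < K + 1 := by
    have hnD : n ≤ ⌊D/ε⌋₊ := Nat.floor_mono (by gcongr)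
    have : j ≤ K := Nat.log_mono_right hnD
    omega
  have hmem : p ∈ closedBall z (2^(j+1)*ε) := mem_closedBall.2 hlt.le
  have hterm : edist p z ^ (-(d:ℝ)) ≤ (ENNReal.ofReal (2^j*ε))^(-(d:ℝ)) := by
    have hle : ENNReal.ofReal (2^j*ε) ≤ edist p z := by
      rw [edist_dist]; exact ENNReal.ofReal_le_ofReal h2j
    rw [ENNReal.rpow_neg, ENNReal.rpow_neg]
    exact ENNReal.inv_le_inv.2 (ENNReal.rpow_le_rpow hle (by positivity))
  calc edist p z ^ (-(d:ℝ))
      ≤ (closedBall z (2^(j+1)*ε)).indicator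
        (fun _ => (ENNReal.ofReal (2^j*ε))^(-(d:ℝ))) p := by
        rw [Set.indicator_of_mem hmem]; exact hterm
    _ ≤ _ := Finset.single_le_sum (f := fun j => (closedBall z (2^(j+1)*ε)).indicator
        (fun _ => (ENNReal.ofReal (2^j*ε))^(-(d:ℝ))) p)
        (fun _ _ => zero_le) (Finset.mem_range.2 hjK)

lemma setLIntegral_kernel_le {d : ℕ} (z : EuclideanSpace ℝ (Fin d)) {ε D : ℝ} (hε : 0 < ε)
    {G : Set (EuclideanSpace ℝ (Fin d))} (hGm : MeasurableSet G)
    (hG : ∀ p ∈ G, ε ≤ dist p z ∧ dist p z ≤ D) :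
    ∫⁻ p in G, edist p z ^ (-(d:ℝ)) ∂volume ≤
      (Nat.log 2 ⌊D/ε⌋₊ + 1) * ((2:ℝ≥0∞)^(d:ℝ) * volume (ball (0 : EuclideanSpace ℝ (Fin d)) 1)) := by
  classical
  set K := Nat.log 2 ⌊D/ε⌋₊ with hK
  set v := volume (ball (0 : EuclideanSpace ℝ (Fin d)) 1) with hv
  have step1 : ∫⁻ p in G, edist p z ^ (-(d:ℝ)) ∂volume ≤
      ∫⁻ p in G, (∑ j ∈ Finset.range (K + 1),
        (closedBall z (2^(j+1)*ε)).indicator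
          (fun _ => (ENNReal.ofReal (2^j*ε))^(-(d:ℝ))) p) ∂volume := by
    refine setLIntegral_mono' hGm fun p hp => ?_
    exact kernel_pointwise z p hε (hG p hp).1 (hG p hp).2
  have step2 : ∫⁻ p in G, (∑ j ∈ Finset.range (K + 1),
        (closedBall z (2^(j+1)*ε)).indicator
          (fun _ => (ENNReal.ofReal (2^j*ε))^(-(d:ℝ))) p) ∂volume ≤
      ∑ j ∈ Finset.range (K + 1), (ENNReal.ofReal (2^j*ε))^(-(d:ℝ)) *
        volume (closedBall z (2^(j+1)*ε)) := by
    refine le_trans (setLIntegral_le_lintegral _ _) ?_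
    rw [lintegral_finset_sum _ (fun j _ => (measurable_const.indicator measurableSet_closedBall))]
    refine le_of_eq (Finset.sum_congr rfl fun j _ => ?_)
    rw [lintegral_indicator_const measurableSet_closedBall]
  have step3 : ∀ j : ℕ, (ENNReal.ofReal (2^j*ε))^(-(d:ℝ)) *
      volume (closedBall z (2^(j+1)*ε)) = (2:ℝ≥0∞)^(d:ℝ) * v := by
    intro j
    have hr : (0:ℝ) ≤ 2^(j+1)*ε := by positivity
    rw [Measure.addHaar_closedBall _ _ hr, finrank_euclideanSpace_fin, ← hv]
    set x := ENNReal.ofReal (2^j*ε) with hx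
    have hx0 : x ≠ 0 := by
      simp only [hx, ne_eq, ENNReal.ofReal_eq_zero, not_le]; positivity
    have hxt : x ≠ ⊤ := ENNReal.ofReal_ne_top
    have h2x : ENNReal.ofReal (2^(j+1)*ε) = 2 * x := by
      have he : (2:ℝ)^(j+1)*ε = 2*(2^j*ε) := by ring
      rw [hx, he, ENNReal.ofReal_mul (by norm_num)]
      norm_num
    have : ENNReal.ofReal ((2^(j+1)*ε)^d) = (2:ℝ≥0∞)^d * x^d := by
      rw [ENNReal.ofReal_pow hr, h2x, mul_pow]
    rw [this]
    have hxx : x^(-(d:ℝ)) * x^(d:ℕ) = 1 := by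
      rw [← ENNReal.rpow_natCast x d, ← ENNReal.rpow_add _ _ hx0 hxt, neg_add_cancel,
        ENNReal.rpow_zero]
    calc x^(-(d:ℝ)) * ((2:ℝ≥0∞)^d * x^d * v) = (2:ℝ≥0∞)^d * (x^(-(d:ℝ)) * x^(d:ℕ)) * v := by ring
    _ = (2:ℝ≥0∞)^d * v := by rw [hxx]; ring
    _ = (2:ℝ≥0∞)^(d:ℝ) * v := by rw [← ENNReal.rpow_natCast 2 d]
  calc ∫⁻ p in G, edist p z ^ (-(d:ℝ)) ∂volume
      ≤ ∑ j ∈ Finset.range (K + 1), (ENNReal.ofReal (2^j*ε))^(-(d:ℝ)) *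
        volume (closedBall z (2^(j+1)*ε)) := step1.trans step2
    _ = ∑ _j ∈ Finset.range (K + 1), (2:ℝ≥0∞)^(d:ℝ) * v :=
        Finset.sum_congr rfl fun j _ => step3 j
    _ = (K + 1) * ((2:ℝ≥0∞)^(d:ℝ) * v) := by
        rw [Finset.sum_const, Finset.card_range, nsmul_eq_mul]; push_cast; ring

lemma exists_good_point {d : ℕ} {A : Set (EuclideanSpace ℝ (Fin d))}
    (hA : IsCompact A) (hA0 : 0 < volume A)
    (T : Finset (EuclideanSpace ℝ (Fin d))) (hTA : ↑T ⊆ A) {N : ℕ}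
    (hTcard : T.card ≤ N) {ε : ℝ} (hε : 0 < ε)
    (hεvol : (N:ℝ≥0∞) * (ENNReal.ofReal (ε^d) *
      volume (ball (0 : EuclideanSpace ℝ (Fin d)) 1)) ≤ volume A / 2) :
    ∃ p ∈ A, (∀ z ∈ T, ε ≤ dist p z) ∧
      ∑ z ∈ T, edist p z ^ (-(d:ℝ)) ≤
        (2 * ((N:ℝ≥0∞) * ((Nat.log 2 ⌊diam A/ε⌋₊ + 1) *
          ((2:ℝ≥0∞)^(d:ℝ) * volume (ball (0 : EuclideanSpace ℝ (Fin d)) 1)))) + volume A)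
          / volume A := by
  classical
  set v := volume (ball (0 : EuclideanSpace ℝ (Fin d)) 1) with hv
  set G : Set (EuclideanSpace ℝ (Fin d)) := A \ ⋃ z ∈ T, closedBall z ε with hG
  have hAt : volume A ≠ ⊤ := hA.measure_lt_top.ne
  have hA0' : volume A ≠ 0 := hA0.ne'
  have hGm : MeasurableSet G :=
    (hA.isClosed.measurableSet).diff
      (MeasurableSet.biUnion T.countable_toSet fun z _ => measurableSet_closedBall)
  have hU : volume (⋃ z ∈ T, closedBall z ε) ≤ volume A / 2 := by
    refine le_trans (measure_biUnion_finset_le T _) ?_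
    have hball : ∀ z : EuclideanSpace ℝ (Fin d), volume (closedBall z ε) = ENNReal.ofReal (ε^d) * v := by
      intro z
      rw [Measure.addHaar_closedBall _ _ hε.le, finrank_euclideanSpace_fin]
    calc ∑ z ∈ T, volume (closedBall z ε) = (T.card : ℝ≥0∞) * (ENNReal.ofReal (ε^d) * v) := by
          simp [hball, Finset.sum_const, nsmul_eq_mul]
      _ ≤ (N:ℝ≥0∞) * (ENNReal.ofReal (ε^d) * v) := by
          gcongr
      _ ≤ volume A / 2 := hεvol
  have hGvol : volume A / 2 ≤ volume G := by
    calc volume A / 2 = volume A - volume A / 2 := (ENNReal.sub_half hAt).symm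
      _ ≤ volume A - volume (⋃ z ∈ T, closedBall z ε) := tsub_le_tsub_left hU _
      _ ≤ volume G := le_measure_diff
  set K := Nat.log 2 ⌊diam A/ε⌋₊ with hK
  set B : ℝ≥0∞ := (N:ℝ≥0∞) * ((K + 1) * ((2:ℝ≥0∞)^(d:ℝ) * v)) with hB
  have hBt : B ≠ ⊤ := by
    rw [hB]
    refine ENNReal.mul_ne_top (ENNReal.natCast_ne_top N) (ENNReal.mul_ne_top ?_ ?_)
    · exact ENNReal.add_ne_top.2 ⟨ENNReal.natCast_ne_top _, ENNReal.one_ne_top⟩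
    · exact ENNReal.mul_ne_top (ENNReal.rpow_ne_top_of_nonneg (by positivity) (by norm_num))
        measure_ball_lt_top.ne
  have hInt : ∫⁻ p in G, (∑ z ∈ T, edist p z ^ (-(d:ℝ))) ∂volume ≤ B := by
    rw [lintegral_finset_sum _ (fun z _ => ?_)]
    · calc ∑ z ∈ T, ∫⁻ p in G, edist p z ^ (-(d:ℝ)) ∂volume
          ≤ ∑ z ∈ T, ((K:ℝ≥0∞) + 1) * ((2:ℝ≥0∞)^(d:ℝ) * v) := by
            refine Finset.sum_le_sum fun z hz => ?_
            refine setLIntegral_kernel_le z hε hGm fun p hp => ?_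
            constructor
            · by_contra hcon
              push_neg at hcon
              exact hp.2 (Set.mem_biUnion hz (mem_closedBall.2 hcon.le))
            · exact dist_le_diam_of_mem hA.isBounded hp.1 (hTA hz)
        _ = (T.card : ℝ≥0∞) * (((K:ℝ≥0∞) + 1) * ((2:ℝ≥0∞)^(d:ℝ) * v)) := by
            simp [Finset.sum_const, nsmul_eq_mul]
        _ ≤ B := by rw [hB]; gcongr
    · exact ((continuous_id.edist continuous_const).measurable).pow_const _
  set M : ℝ≥0∞ := (2 * B + volume A) / volume A with hM
  by_contra hcon
  push_neg at hcon
  have hlow : ∀ p ∈ G, M ≤ ∑ z ∈ T, edist p z ^ (-(d:ℝ)) := by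
    intro p hp
    have hpA : p ∈ A := hp.1
    have hsep : ∀ z ∈ T, ε ≤ dist p z := by
      intro z hz
      by_contra hcon2
      push_neg at hcon2
      exact hp.2 (Set.mem_biUnion hz (mem_closedBall.2 hcon2.le))
    exact (hcon p hpA hsep).le
  have hint2 : M * (volume A / 2) ≤ B := by
    calc M * (volume A / 2) ≤ M * volume G := by gcongr
      _ = ∫⁻ _ in G, M ∂volume := by rw [setLIntegral_const]
      _ ≤ ∫⁻ p in G, (∑ z ∈ T, edist p z ^ (-(d:ℝ))) ∂volume := setLIntegral_mono' hGm hlow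
      _ ≤ B := hInt
  have hMcalc : M * (volume A / 2) = B + volume A / 2 := by
    rw [hM, ENNReal.div_eq_inv_mul, ENNReal.div_eq_inv_mul]
    calc (volume A)⁻¹ * (2 * B + volume A) * (2⁻¹ * volume A)
        = ((volume A)⁻¹ * volume A) * (2⁻¹ * (2 * B + volume A)) := by ring
      _ = 2⁻¹ * (2 * B + volume A) := by rw [ENNReal.inv_mul_cancel hA0' hAt, one_mul]
      _ = (2⁻¹ * 2) * B + 2⁻¹ * volume A := by ring
      _ = B + 2⁻¹ * volume A := by
          rw [ENNReal.inv_mul_cancel (by norm_num) (by norm_num), one_mul]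
  rw [hMcalc] at hint2
  have : (0:ℝ≥0∞) < volume A / 2 := ENNReal.div_pos hA0' (by norm_num)
  exact absurd hint2 (by
    have := ENNReal.lt_add_right hBt this.ne'
    exact not_le.2 this)

lemma Klog_bound {d : ℕ} (hd : 1 ≤ d) {D a : ℝ} (hD : 0 ≤ D) (ha : 0 < a)
    {N : ℕ} (hN : 2 ≤ N) :
    (Nat.log 2 ⌊D / (a / N) ^ (1 / (d:ℝ))⌋₊ + 1 : ℝ) ≤
      (|Real.log D| + |Real.log a| + 2 * Real.log 2) / (Real.log 2 * Real.log 2)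
        * Real.log N := by
  have hL2 : (0:ℝ) < Real.log 2 := Real.log_pos one_lt_two
  set L2 := Real.log 2 with hL2def
  have hN0 : (0:ℝ) < N := by positivity
  have haN : (0:ℝ) < a / N := by positivity
  set ε := (a / N) ^ (1 / (d:ℝ)) with hεdef
  have hε : 0 < ε := Real.rpow_pos_of_pos haN _
  set m := ⌊D / ε⌋₊ with hm
  set K := Nat.log 2 m with hKdef
  have hlogN : L2 ≤ Real.log N := Real.log_le_log (by norm_num) (by exact_mod_cast hN)
  have hlogN0 : 0 < Real.log N := lt_of_lt_of_le hL2 hlogN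
  set c₀ := |Real.log D| + |Real.log a| with hc₀def
  have hc₀ : 0 ≤ c₀ := by positivity
  have hd1 : (1:ℝ) ≤ (d:ℝ) := by exact_mod_cast hd
  have hdpos : (0:ℝ) < (d:ℝ) := by linarith
  have hKL : (K:ℝ) * L2 ≤ c₀ + Real.log N := by
    rcases Nat.eq_zero_or_pos K with hK0 | hK1
    · rw [hK0]
      push_cast
      nlinarith
    · have hm2 : 2 ≤ m := by
        by_contra h
        push_neg at h
        rw [hKdef, Nat.log_eq_zero_iff.2 (Or.inl h)] at hK1
        omega
      have hm0 : m ≠ 0 := by omega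
      have h2K : ((2:ℝ))^K ≤ (m:ℝ) := by
        exact_mod_cast Nat.pow_log_le_self 2 hm0
      have hmle : (m:ℝ) ≤ D / ε := Nat.floor_le (by positivity)
      have hDε : (2:ℝ) ≤ D / ε := le_trans (by exact_mod_cast hm2) hmle
      have hD0 : 0 < D := by
        by_contra h
        push_neg at h
        have : D / ε ≤ 0 := div_nonpos_of_nonpos_of_nonneg h hε.le
        linarith
      have hstep : (K:ℝ) * L2 ≤ Real.log (D / ε) := by
        calc (K:ℝ) * L2 = Real.log ((2:ℝ)^K) := by rw [Real.log_pow]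
        _ ≤ Real.log (D / ε) := Real.log_le_log (by positivity) (h2K.trans hmle)
      have hlogε : Real.log ε = (1 / (d:ℝ)) * (Real.log a - Real.log N) := by
        rw [hεdef, Real.log_rpow haN, Real.log_div ha.ne' hN0.ne']
      have hlogdiv : Real.log (D / ε) = Real.log D - Real.log ε :=
        Real.log_div hD0.ne' hε.ne'
      have h1d : 0 < 1 / (d:ℝ) := by positivity
      have h1d1 : 1 / (d:ℝ) ≤ 1 := by
        rw [div_le_one hdpos]; exact hd1
      have habs1 : Real.log D ≤ |Real.log D| := le_abs_self _
      have habs2 : -Real.log a ≤ |Real.log a| := neg_le_abs _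
      rw [hlogdiv, hlogε] at hstep
      have hb1 : (1/(d:ℝ)) * (-Real.log a) ≤ |Real.log a| := by
        calc (1/(d:ℝ)) * (-Real.log a) ≤ (1/(d:ℝ)) * |Real.log a| :=
              mul_le_mul_of_nonneg_left habs2 h1d.le
        _ ≤ 1 * |Real.log a| := mul_le_mul_of_nonneg_right h1d1 (abs_nonneg _)
        _ = |Real.log a| := one_mul _
      have hb2 : (1/(d:ℝ)) * Real.log N ≤ Real.log N := by
        nlinarith
      rw [hc₀def]
      nlinarith
  have hprod1 : (K:ℝ) * L2 * L2 ≤ (c₀ + Real.log N) * L2 :=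
    mul_le_mul_of_nonneg_right hKL hL2.le
  have hprod2 : c₀ * L2 ≤ c₀ * Real.log N := mul_le_mul_of_nonneg_left hlogN hc₀
  have hprod3 : L2 * L2 ≤ Real.log N * L2 := mul_le_mul_of_nonneg_right hlogN hL2.le
  have h1 : ((K:ℝ) + 1) * (L2 * L2) ≤ (c₀ + 2 * L2) * Real.log N := by nlinarith
  rw [div_mul_eq_mul_div, le_div_iff₀ (by positivity)]
  linarith [h1]

/-- separation of optimal `d`-energy configurations:
`min_{i≠j} |x_i - x_j| ≥ C (N log N)^{-1/d}`. -/
theorem separation_of_optimal_config_crit (d : ℕ) (hd : 1 ≤ d)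
    (A : Set (EuclideanSpace ℝ (Fin d))) (hA : IsCompact A) (hA0 : 0 < volume A) :
    ∃ C : ℝ, 0 < C ∧ ∀ N : ℕ, 2 ≤ N →
      ∀ ω : Finset (EuclideanSpace ℝ (Fin d)), ↑ω ⊆ A → ω.card = N →
        rieszEnergy (d : ℝ) ω = minRieszEnergy (d : ℝ) A N →
          ∀ x ∈ ω, ∀ y ∈ ω, x ≠ y →
            C * ((N : ℝ) * Real.log N) ^ (-(1 / (d : ℝ))) ≤ dist x y := by
  classical
  have hAt : volume A ≠ ⊤ := hA.measure_lt_top.ne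
  have hA0' : volume A ≠ 0 := hA0.ne'
  set v := volume (ball (0 : EuclideanSpace ℝ (Fin d)) 1) with hv
  have hv0 : v ≠ 0 := (measure_ball_pos volume _ one_pos).ne'
  have hvt : v ≠ ⊤ := measure_ball_lt_top.ne
  have hw : 0 < v.toReal := ENNReal.toReal_pos hv0 hvt
  have hvolA : 0 < (volume A).toReal := ENNReal.toReal_pos hA0' hAt
  have hL2 : (0:ℝ) < Real.log 2 := Real.log_pos one_lt_two
  set a := (volume A).toReal / (2 * v.toReal) with hadef
  have ha : 0 < a := by positivity
  set D := diam A with hDdef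
  have hDnn : 0 ≤ D := diam_nonneg
  set cK := (|Real.log D| + |Real.log a| + 2 * Real.log 2) / (Real.log 2 * Real.log 2)
    with hcKdef
  have hcKpos : 0 < cK := by positivity
  set c2 := (2:ℝ)^d with hc2def
  have hc2pos : 0 < c2 := by positivity
  set cM := (2 * cK * c2 * v.toReal + (volume A).toReal / (2 * Real.log 2))
    / (volume A).toReal with hcMdef
  have hcMpos : 0 < cM := by positivity
  refine ⟨cM ^ (-(1/(d:ℝ))), Real.rpow_pos_of_pos hcMpos _, ?_⟩
  intro N hN ω hsub hcard hopt x hx y hy hxy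
  have hd0 : (d:ℝ) ≠ 0 := Nat.cast_ne_zero.2 (by omega)
  have hdpos : (0:ℝ) < d := by positivity
  have hNr : (0:ℝ) < N := by positivity
  have hN1 : (1:ℝ) ≤ N := by exact_mod_cast le_trans one_le_two hN
  have hlogN : Real.log 2 ≤ Real.log N := Real.log_le_log (by norm_num) (by exact_mod_cast hN)
  have hlogN0 : 0 < Real.log N := lt_of_lt_of_le hL2 hlogN
  set ε := (a / N) ^ (1 / (d:ℝ)) with hεdef
  have hεpos : 0 < ε := Real.rpow_pos_of_pos (by positivity) _
  have hεd : ε ^ d = a / N := by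
    rw [hεdef, ← Real.rpow_natCast ((a/N) ^ (1/(d:ℝ))) d,
      ← Real.rpow_mul (by positivity : (0:ℝ) ≤ a / N)]
    have h1 : (1/(d:ℝ)) * (d:ℝ) = 1 := by field_simp
    rw [h1, Real.rpow_one]
  have hεvol : (N:ℝ≥0∞) * (ENNReal.ofReal (ε^d) * v) = volume A / 2 := by
    rw [hεd]
    have h1 : (N:ℝ≥0∞) * ENNReal.ofReal (a/N) = ENNReal.ofReal a := by
      rw [← ENNReal.ofReal_natCast N, ← ENNReal.ofReal_mul (by positivity)]
      congr 1
      field_simp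
    have h2 : ENNReal.ofReal a = volume A / (2 * v) := by
      rw [hadef, ENNReal.ofReal_div_of_pos (by positivity), ENNReal.ofReal_toReal hAt,
        ENNReal.ofReal_mul (by norm_num), ENNReal.ofReal_toReal hvt]
      norm_num
    rw [← mul_assoc, h1, h2, ENNReal.div_eq_inv_mul, ENNReal.div_eq_inv_mul,
      ENNReal.mul_inv (Or.inr hvt) (Or.inr hv0)]
    calc 2⁻¹ * v⁻¹ * volume A * v = 2⁻¹ * volume A * (v⁻¹ * v) := by ring
      _ = 2⁻¹ * volume A := by rw [ENNReal.inv_mul_cancel hv0 hvt, mul_one]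
  set T := ω.erase x with hTdef
  have hTA : ↑T ⊆ A := fun z hz => hsub (Finset.mem_coe.2 (Finset.erase_subset x ω hz))
  have hTcard : T.card ≤ N := le_trans (Finset.card_erase_le) hcard.le
  obtain ⟨p, hpA, hpsep, hppot⟩ :=
    exists_good_point hA hA0 T hTA hTcard hεpos (le_of_eq hεvol)
  have hpT : p ∉ T := by
    intro h
    have := hpsep p h
    rw [dist_self] at this
    linarith
  have hvar := variational hsub hcard hopt hx hpA (by convert hpT)
  set K := Nat.log 2 ⌊D / ε⌋₊ with hKdef
  set M : ℝ≥0∞ := (2 * ((N:ℝ≥0∞) * ((K + 1) * ((2:ℝ≥0∞)^(d:ℝ) * v))) + volume A)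
    / volume A with hMdef
  have hkey : edist x y ^ (-(d:ℝ)) ≤ M := by
    calc edist x y ^ (-(d:ℝ)) ≤ ∑ z ∈ T, edist x z ^ (-(d:ℝ)) :=
        Finset.single_le_sum (f := fun z => edist x z ^ (-(d:ℝ)))
          (fun _ _ => zero_le) (Finset.mem_erase.2 ⟨Ne.symm hxy, hy⟩)
      _ ≤ ∑ z ∈ T, edist p z ^ (-(d:ℝ)) := by convert hvar
      _ ≤ M := hppot
  have hBne : 2 * ((N:ℝ≥0∞) * ((K + 1) * ((2:ℝ≥0∞)^(d:ℝ) * v))) ≠ ⊤ := by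
    refine ENNReal.mul_ne_top (by norm_num) (ENNReal.mul_ne_top (ENNReal.natCast_ne_top N)
      (ENNReal.mul_ne_top ?_ ?_))
    · exact ENNReal.add_ne_top.2 ⟨ENNReal.natCast_ne_top _, ENNReal.one_ne_top⟩
    · exact ENNReal.mul_ne_top (ENNReal.rpow_ne_top_of_nonneg (by positivity) (by norm_num)) hvt
  have hMt : M ≠ ⊤ := by
    rw [hMdef]
    exact (ENNReal.div_lt_top (ENNReal.add_ne_top.2 ⟨hBne, hAt⟩) hA0').ne
  have hM0 : M ≠ 0 := by
    rw [hMdef]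
    refine (ENNReal.div_pos ?_ hAt).ne'
    intro h
    rw [add_eq_zero] at h
    exact hA0' h.2
  have hMrealpos : 0 < M.toReal := ENNReal.toReal_pos hM0 hMt
  -- real bound on M.toReal
  have hKb : (K + 1 : ℝ) ≤ cK * Real.log N := by
    rw [hKdef, hcKdef]
    exact Klog_bound hd hDnn ha hN
  have hN2 : (2:ℝ) ≤ N := by exact_mod_cast hN
  have hNlog : 2 * Real.log 2 ≤ (N:ℝ) * Real.log N := by nlinarith
  have hMreal : M.toReal ≤ cM * ((N:ℝ) * Real.log N) := by
    have htr : M.toReal = (2 * ((N:ℝ) * (((K:ℝ) + 1) * (c2 * v.toReal)))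
        + (volume A).toReal) / (volume A).toReal := by
      rw [hMdef, ENNReal.toReal_div, ENNReal.toReal_add hBne hAt, ENNReal.toReal_mul,
        ENNReal.toReal_mul, ENNReal.toReal_mul, ENNReal.toReal_mul,
        ENNReal.toReal_add (ENNReal.natCast_ne_top K) ENNReal.one_ne_top,
        ← ENNReal.toReal_rpow]
      norm_num [hc2def, Real.rpow_natCast]
    rw [htr, hcMdef, div_mul_eq_mul_div]
    have e1 : 2 * ((N:ℝ) * (((K:ℝ) + 1) * (c2 * v.toReal)))
        ≤ 2 * cK * c2 * v.toReal * ((N:ℝ) * Real.log N) := by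
      have h := mul_le_mul_of_nonneg_left hKb
        (show (0:ℝ) ≤ 2 * (N:ℝ) * (c2 * v.toReal) by positivity)
      calc 2 * ((N:ℝ) * (((K:ℝ) + 1) * (c2 * v.toReal)))
          = 2 * (N:ℝ) * (c2 * v.toReal) * ((K:ℝ) + 1) := by ring
        _ ≤ 2 * (N:ℝ) * (c2 * v.toReal) * (cK * Real.log N) := h
        _ = 2 * cK * c2 * v.toReal * ((N:ℝ) * Real.log N) := by ring
    have e2 : (volume A).toReal
        ≤ (volume A).toReal / (2 * Real.log 2) * ((N:ℝ) * Real.log N) := by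
      rw [div_mul_eq_mul_div, le_div_iff₀ (by positivity)]
      exact mul_le_mul_of_nonneg_left hNlog hvolA.le
    refine (div_le_div_iff_of_pos_right hvolA).2 ?_
    calc 2 * ((N:ℝ) * (((K:ℝ) + 1) * (c2 * v.toReal))) + (volume A).toReal
        ≤ 2 * cK * c2 * v.toReal * ((N:ℝ) * Real.log N)
          + (volume A).toReal / (2 * Real.log 2) * ((N:ℝ) * Real.log N) :=
          add_le_add e1 e2
      _ = (2 * cK * c2 * v.toReal + (volume A).toReal / (2 * Real.log 2))
          * ((N:ℝ) * Real.log N) := by ring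
  have hinv : M⁻¹ ≤ edist x y ^ (d:ℝ) := by
    rw [ENNReal.rpow_neg] at hkey
    calc M⁻¹ ≤ ((edist x y ^ (d:ℝ))⁻¹)⁻¹ := ENNReal.inv_le_inv.2 hkey
      _ = edist x y ^ (d:ℝ) := inv_inv _
  have hrpow : (M⁻¹) ^ (1/(d:ℝ)) ≤ edist x y := by
    have h := ENNReal.rpow_le_rpow hinv (by positivity : (0:ℝ) ≤ 1/(d:ℝ))
    rwa [← ENNReal.rpow_mul, show (d:ℝ) * (1/(d:ℝ)) = 1 by field_simp,
      ENNReal.rpow_one] at h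
  have hdist : M.toReal ^ (-(1/(d:ℝ))) ≤ dist x y := by
    have h := ENNReal.toReal_mono (edist_ne_top x y) hrpow
    rw [← ENNReal.toReal_rpow, ENNReal.toReal_inv] at h
    rw [dist_edist, Real.rpow_neg ENNReal.toReal_nonneg,
      ← Real.inv_rpow ENNReal.toReal_nonneg]
    exact h
  calc cM ^ (-(1/(d:ℝ))) * ((N:ℝ) * Real.log N) ^ (-(1/(d:ℝ)))
      = (cM * ((N:ℝ) * Real.log N)) ^ (-(1/(d:ℝ))) :=
        (Real.mul_rpow hcMpos.le (mul_nonneg hNr.le hlogN0.le)).symm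
    _ ≤ M.toReal ^ (-(1/(d:ℝ))) :=
        Real.rpow_le_rpow_of_nonpos hMrealpos hMreal (neg_nonpos.2 (by positivity))
    _ ≤ dist x y := hdist
end

section
/- Fix an integer d ≥ 1 and a real s > d. Let A ⊆ ℝ^d be a bounded set with nonempty interior. Then there exist positive finite constants C_0 and C_1 (depending on A, s, d but not on N) such that C_0 · N^{1+s/d} ≤ ℰ_s(A,N) ≤ C_1 · N^{1+s/d} for all integers N ≥ 2. -/
open scoped ENNReal NNReal BigOperators Classical
open MeasureTheory Filter Metric Set Topology

lemma jensen_chain {ι : Type*} (u : Finset ι) (t : ι → ℝ) (K q : ℝ) (hq : 1 ≤ q)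
    (hK : 0 < K) (ht : ∀ i ∈ u, 0 < t i) (hsum : ∑ i ∈ u, t i ≤ K) :
    (u.card : ℝ) ^ (1 + q) * K ^ (-q) ≤ ∑ i ∈ u, (t i) ^ (-q) := by
  rcases u.eq_empty_or_nonempty with rfl | hne
  · simp [Real.zero_rpow (by positivity : (1:ℝ) + q ≠ 0)]
  set n : ℝ := (u.card : ℝ) with hn
  have hn0 : 0 < n := by show (0:ℝ) < (u.card:ℝ); exact_mod_cast Finset.card_pos.2 hne
  -- Cauchy-Schwarz: n^2 ≤ (∑ t) * (∑ t⁻¹)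
  have hcs : n ^ 2 ≤ (∑ i ∈ u, t i) * (∑ i ∈ u, (t i)⁻¹) := by
    have := Finset.sum_mul_sq_le_sq_mul_sq u (fun i => Real.sqrt (t i))
      (fun i => (Real.sqrt (t i))⁻¹)
    have h1 : ∑ i ∈ u, Real.sqrt (t i) * (Real.sqrt (t i))⁻¹ = n := by
      have : ∀ i ∈ u, Real.sqrt (t i) * (Real.sqrt (t i))⁻¹ = 1 := fun i hi =>
        mul_inv_cancel₀ (Real.sqrt_ne_zero'.2 (ht i hi))
      rw [Finset.sum_congr rfl this, Finset.sum_const, nsmul_eq_mul, mul_one, hn]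
    have h2 : ∑ i ∈ u, Real.sqrt (t i) ^ 2 = ∑ i ∈ u, t i :=
      Finset.sum_congr rfl fun i hi => Real.sq_sqrt (ht i hi).le
    have h3 : ∑ i ∈ u, ((Real.sqrt (t i))⁻¹) ^ 2 = ∑ i ∈ u, (t i)⁻¹ := by
      refine Finset.sum_congr rfl fun i hi => ?_
      rw [inv_pow, Real.sq_sqrt (ht i hi).le]
    rwa [h1, h2, h3] at this
  have hSnn : 0 ≤ ∑ i ∈ u, (t i)⁻¹ :=
    Finset.sum_nonneg fun i hi => (inv_pos.2 (ht i hi)).le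
  have hinv : n ^ 2 / K ≤ ∑ i ∈ u, (t i)⁻¹ := by
    rw [div_le_iff₀ hK]
    calc n ^ 2 ≤ (∑ i ∈ u, t i) * (∑ i ∈ u, (t i)⁻¹) := hcs
    _ ≤ K * (∑ i ∈ u, (t i)⁻¹) := by
        exact mul_le_mul_of_nonneg_right hsum hSnn
    _ = (∑ i ∈ u, (t i)⁻¹) * K := mul_comm _ _
  -- Jensen
  have hj := Real.rpow_arith_mean_le_arith_mean_rpow u (fun _ => n⁻¹) (fun i => (t i)⁻¹)
    (fun i _ => by positivity) (by
      rw [Finset.sum_const, nsmul_eq_mul, ← hn, mul_inv_cancel₀ hn0.ne'])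
    (fun i hi => (inv_pos.2 (ht i hi)).le) hq
  rw [← Finset.mul_sum, ← Finset.mul_sum] at hj
  have hrw : ∑ i ∈ u, (t i) ^ (-q) = ∑ i ∈ u, ((t i)⁻¹) ^ q := by
    refine Finset.sum_congr rfl fun i hi => ?_
    rw [Real.rpow_neg (ht i hi).le, ← Real.inv_rpow (ht i hi).le]
  rw [hrw]
  have key : n * (n⁻¹ * (∑ i ∈ u, (t i)⁻¹)) ^ q ≤ ∑ i ∈ u, ((t i)⁻¹) ^ q := by
    calc n * (n⁻¹ * (∑ i ∈ u, (t i)⁻¹)) ^ q ≤ n * (n⁻¹ * ∑ i ∈ u, ((t i)⁻¹) ^ q) :=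
      mul_le_mul_of_nonneg_left hj hn0.le
    _ = ∑ i ∈ u, ((t i)⁻¹) ^ q := by field_simp
  refine le_trans ?_ key
  have h5 : n⁻¹ * (n ^ 2 / K) ≤ n⁻¹ * (∑ i ∈ u, (t i)⁻¹) :=
    mul_le_mul_of_nonneg_left hinv (by positivity)
  have h6 : n⁻¹ * (n ^ 2 / K) = n / K := by field_simp
  calc n ^ (1 + q) * K ^ (-q) = n * (n / K) ^ q := by
        rw [Real.rpow_add hn0, Real.rpow_one, Real.div_rpow hn0.le hK.le,
          Real.rpow_neg hK.le, mul_assoc, div_eq_mul_inv]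
  _ ≤ n * (n⁻¹ * (∑ i ∈ u, (t i)⁻¹)) ^ q := by
      refine mul_le_mul_of_nonneg_left ?_ hn0.le
      refine Real.rpow_le_rpow (by positivity) ?_ (by linarith)
      rw [← h6]; exact h5


/-- distance to the nearest other point of `ω` -/
noncomputable def minDist {E : Type*} [MetricSpace E] (ω : Finset E) (x : E) : ℝ :=
  if h : (ω.erase x).Nonempty then (ω.erase x).inf' h (fun y => dist x y) else 1

lemma minDist_exists {E : Type*} [MetricSpace E] {ω : Finset E} {x : E}
    (h : (ω.erase x).Nonempty) : ∃ y ∈ ω.erase x, dist x y = minDist ω x := by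
  rw [minDist, dif_pos h]
  obtain ⟨y, hy, hy2⟩ := Finset.exists_mem_eq_inf' h (fun y => dist x y)
  exact ⟨y, hy, hy2.symm⟩

lemma minDist_le {E : Type*} [MetricSpace E] {ω : Finset E} {x y : E}
    (hy : y ∈ ω.erase x) : minDist ω x ≤ dist x y := by
  rw [minDist, dif_pos ⟨y, hy⟩]
  exact Finset.inf'_le _ hy

lemma energy_lower {d : ℕ} (hd : 1 ≤ d) {s : ℝ} (hs : (d:ℝ) < s)
    {c : EuclideanSpace ℝ (Fin d)} {R : ℝ} (hR : 0 < R) (K : ℝ)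
    (hK : ((volume (closedBall c (2*R))) /
      volume (ball (0:EuclideanSpace ℝ (Fin d)) 1)).toReal + 1 ≤ K)
    (ω : Finset (EuclideanSpace ℝ (Fin d))) (hω : ↑ω ⊆ closedBall c R) (hcard : 2 ≤ ω.card) :
    ENNReal.ofReal (((2:ℝ)^d * K)^(-(s/(d:ℝ))) * (ω.card:ℝ)^(1 + s/(d:ℝ))) ≤ rieszEnergy s ω := by
  have dpos : (0:ℝ) < d := by exact_mod_cast hd
  have hKpos : 0 < K := lt_of_lt_of_le (by positivity) hK
  have hne : ∀ x ∈ ω, (ω.erase x).Nonempty := by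
    intro x hx
    have h1 : 0 < (ω.erase x).card := by
      rw [Finset.card_erase_of_mem hx]; omega
    exact Finset.card_pos.1 h1
  set δ : EuclideanSpace ℝ (Fin d) → ℝ := minDist ω with hδdef
  have hδeq : ∀ x ∈ ω, ∃ y ∈ ω.erase x, dist x y = δ x := fun x hx => by
    obtain ⟨y, hy, hy2⟩ := minDist_exists (ω := ω) (x := x) (by convert hne x hx)
    exact ⟨y, by convert hy, hy2⟩
  have hδle : ∀ x ∈ ω, ∀ y ∈ ω.erase x, δ x ≤ dist x y := fun x _ y hy => minDist_le (by convert hy)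
  have hδpos : ∀ x ∈ ω, 0 < δ x := by
    intro x hx
    obtain ⟨y, hy, hyd⟩ := hδeq x hx
    rw [← hyd]
    exact dist_pos.2 (Ne.symm (Finset.ne_of_mem_erase hy))
  have hδR : ∀ x ∈ ω, δ x ≤ 2 * R := by
    intro x hx
    obtain ⟨y, hy, hyd⟩ := hδeq x hx
    rw [← hyd]
    calc dist x y ≤ dist x c + dist c y := dist_triangle _ _ _
    _ ≤ R + R := add_le_add (hω hx) (by rw [dist_comm]; exact hω (Finset.mem_of_mem_erase hy))
    _ = 2 * R := by ring
  -- energy is at least the sum of δ^(-s)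
  have h2 : ENNReal.ofReal (∑ x ∈ ω, δ x ^ (-s)) ≤ rieszEnergy s ω := by
    rw [ENNReal.ofReal_sum_of_nonneg (fun x hx => Real.rpow_nonneg (hδpos x hx).le _)]
    refine Finset.sum_le_sum fun x hx => ?_
    obtain ⟨y, hy, hyd⟩ := hδeq x hx
    have hxy : x ≠ y := fun h => (Finset.ne_of_mem_erase hy) h.symm
    have he : ENNReal.ofReal (δ x ^ (-s)) = (if x = y then 0 else edist x y ^ (-s)) := by
      rw [if_neg hxy, edist_dist, ← hyd,
        ENNReal.ofReal_rpow_of_pos (dist_pos.2 hxy)]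
    rw [he]
    convert Finset.single_le_sum (f := fun y => if x = y then 0 else edist x y ^ (-s))
      (fun _ _ => zero_le') (Finset.mem_of_mem_erase hy)
  -- disjoint balls
  have hdisj : (↑ω : Set (EuclideanSpace ℝ (Fin d))).PairwiseDisjoint
      (fun x => ball x (δ x / 2)) := by
    intro x hx y hy hxy
    simp only [Function.onFun]
    rw [Set.disjoint_left]
    intro z hzx hzy
    have h1 : δ x ≤ dist x y := hδle x hx y (Finset.mem_erase.2 ⟨hxy.symm, hy⟩)
    have h2' : δ y ≤ dist x y := by
      rw [dist_comm]
      exact hδle y hy x (Finset.mem_erase.2 ⟨hxy, hx⟩)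
    have hz1 : dist z x < δ x / 2 := mem_ball.1 hzx
    have hz2 : dist z y < δ y / 2 := mem_ball.1 hzy
    have : dist x y ≤ dist x z + dist z y := dist_triangle _ _ _
    rw [dist_comm x z] at this
    linarith
  have hsub : ∀ x ∈ ω, ball x (δ x / 2) ⊆ closedBall c (2*R) := by
    intro x hx z hz
    have hz1 : dist z x < δ x / 2 := mem_ball.1 hz
    have hxc : dist x c ≤ R := hω hx
    have := hδR x hx
    have h3 : dist z c ≤ dist z x + dist x c := dist_triangle _ _ _
    rw [mem_closedBall]
    linarith
  have hVb0 : volume (ball (0:EuclideanSpace ℝ (Fin d)) 1) ≠ 0 :=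
    (measure_ball_pos _ _ one_pos).ne'
  have hVbtop : volume (ball (0:EuclideanSpace ℝ (Fin d)) 1) ≠ ⊤ := measure_ball_lt_top.ne
  have hvol : ∀ x ∈ ω, volume (ball x (δ x / 2)) =
      ENNReal.ofReal ((δ x / 2)^d) * volume (ball (0:EuclideanSpace ℝ (Fin d)) 1) := by
    intro x hx
    rw [Measure.addHaar_ball_of_pos volume x (by have := hδpos x hx; linarith),
      finrank_euclideanSpace_fin]
  have hsumvol : ∑ x ∈ ω, ENNReal.ofReal ((δ x / 2)^d) *
      volume (ball (0:EuclideanSpace ℝ (Fin d)) 1) ≤ volume (closedBall c (2*R)) := by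
    calc ∑ x ∈ ω, ENNReal.ofReal ((δ x / 2)^d) * volume (ball (0:EuclideanSpace ℝ (Fin d)) 1)
        = ∑ x ∈ ω, volume (ball x (δ x / 2)) :=
        Finset.sum_congr rfl fun x hx => (hvol x hx).symm
    _ = volume (⋃ x ∈ ω, ball x (δ x / 2)) :=
        (measure_biUnion_finset hdisj fun x _ => measurableSet_ball).symm
    _ ≤ volume (closedBall c (2*R)) := measure_mono (Set.iUnion₂_subset hsub)
  have hTle : ∑ x ∈ ω, (δ x / 2)^d ≤ K := by
    have h1 : ENNReal.ofReal (∑ x ∈ ω, (δ x / 2)^d) *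
        volume (ball (0:EuclideanSpace ℝ (Fin d)) 1) ≤ volume (closedBall c (2*R)) := by
      rw [ENNReal.ofReal_sum_of_nonneg (fun x hx => by have := hδpos x hx; positivity), Finset.sum_mul]
      exact hsumvol
    have h2' : ENNReal.ofReal (∑ x ∈ ω, (δ x / 2)^d) ≤
        volume (closedBall c (2*R)) / volume (ball (0:EuclideanSpace ℝ (Fin d)) 1) :=
      (ENNReal.le_div_iff_mul_le (Or.inl hVb0) (Or.inl hVbtop)).2 h1
    have h3 : volume (closedBall c (2*R)) / volume (ball (0:EuclideanSpace ℝ (Fin d)) 1) ≠ ⊤ :=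
      (ENNReal.div_lt_top measure_closedBall_lt_top.ne hVb0).ne
    have h4 := (ENNReal.ofReal_le_iff_le_toReal h3).1 h2'
    linarith
  have hTle' : ∑ x ∈ ω, (δ x)^d ≤ 2^d * K := by
    have he : ∀ x ∈ ω, (δ x)^d = 2^d * (δ x / 2)^d := by
      intro x hx
      rw [div_pow]
      field_simp
    rw [Finset.sum_congr rfl he, ← Finset.mul_sum]
    exact mul_le_mul_of_nonneg_left hTle (by positivity)
  -- apply Jensen chain
  have hq : 1 ≤ s / (d:ℝ) := (one_le_div dpos).2 hs.le
  have hjc := jensen_chain ω (fun x => (δ x)^d) (2^d * K) (s/(d:ℝ)) hq (by positivity)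
    (fun x hx => by have := hδpos x hx; positivity) hTle'
  have hrw : ∀ x ∈ ω, ((δ x)^d : ℝ) ^ (-(s/(d:ℝ))) = δ x ^ (-s) := by
    intro x hx
    rw [← Real.rpow_natCast (δ x) d, ← Real.rpow_mul (hδpos x hx).le]
    congr 1
    field_simp
  rw [Finset.sum_congr rfl hrw] at hjc
  refine le_trans ?_ h2
  refine ENNReal.ofReal_le_ofReal ?_
  rw [mul_comm]
  exact hjc


lemma rieszEnergy_mono {E : Type*} [PseudoEMetricSpace E] (s : ℝ) {ω G : Finset E}
    (h : ω ⊆ G) : rieszEnergy s ω ≤ rieszEnergy s G := by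
  rw [rieszEnergy, rieszEnergy]
  calc ∑ x ∈ ω, ∑ y ∈ ω, (if x = y then 0 else edist x y ^ (-s))
      ≤ ∑ x ∈ ω, ∑ y ∈ G, (if x = y then 0 else edist x y ^ (-s)) :=
        Finset.sum_le_sum fun x _ => Finset.sum_le_sum_of_subset h
  _ ≤ ∑ x ∈ G, ∑ y ∈ G, (if x = y then 0 else edist x y ^ (-s)) :=
        Finset.sum_le_sum_of_subset h

lemma coord_sum_bound {p : ℝ} (hp : 1 < p) (m a : ℕ) :
    ∑ t ∈ Finset.range m, (1 + |(a:ℝ) - (t:ℝ)|) ^ (-p) ≤ 2 * ∑' n : ℕ, (n:ℝ) ^ (-p) := by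
  have hg : Summable (fun n : ℕ => (n:ℝ) ^ (-p)) := Real.summable_nat_rpow.2 (by linarith)
  have hgnn : ∀ n : ℕ, 0 ≤ (n:ℝ) ^ (-p) := fun n => Real.rpow_nonneg (Nat.cast_nonneg n) _
  have key : ∀ (S : Finset ℕ) (F : ℕ → ℕ), (Set.InjOn F ↑S) →
      (∀ t ∈ S, (1 + |(a:ℝ) - (t:ℝ)|) = ((F t : ℕ) : ℝ)) →
      ∑ t ∈ S, (1 + |(a:ℝ) - (t:ℝ)|) ^ (-p) ≤ ∑' n : ℕ, (n:ℝ) ^ (-p) := by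
    intro S F hinj heq
    have h1 : ∑ t ∈ S, (1 + |(a:ℝ) - (t:ℝ)|) ^ (-p) = ∑ n ∈ S.image F, (n:ℝ) ^ (-p) := by
      rw [Finset.sum_image (fun x hx y hy h => hinj hx hy h)]
      exact Finset.sum_congr rfl fun t ht => by rw [heq t ht]
    rw [h1]
    exact Summable.sum_le_tsum _ (fun n _ => hgnn n) hg
  rw [← Finset.sum_filter_add_sum_filter_not (Finset.range m) (fun t => t ≤ a), two_mul]
  refine add_le_add ?_ ?_
  · refine key _ (fun t => a - t + 1) ?_ ?_
    · intro t1 h1 t2 h2 he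
      simp only [Finset.coe_filter, Set.mem_setOf_eq] at h1 h2
      simp only at he
      omega
    · intro t ht
      simp only [Finset.mem_filter] at ht
      have : (t:ℝ) ≤ (a:ℝ) := by exact_mod_cast ht.2
      rw [abs_of_nonneg (by linarith)]
      push_cast [Nat.cast_sub ht.2]
      ring
  · refine key _ (fun t => t - a + 1) ?_ ?_
    · intro t1 h1 t2 h2 he
      simp only [Finset.coe_filter, Set.mem_setOf_eq] at h1 h2
      simp only at he
      omega
    · intro t ht
      simp only [Finset.mem_filter, not_le] at ht
      have : (a:ℝ) ≤ (t:ℝ) := by exact_mod_cast ht.2.le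
      rw [abs_of_nonpos (by linarith)]
      push_cast [Nat.cast_sub ht.2.le]
      ring


set_option maxHeartbeats 2000000 in
lemma energy_upper {d : ℕ} (hd : 1 ≤ d) {s : ℝ} (hs : (d:ℝ) < s)
    {x₀ : EuclideanSpace ℝ (Fin d)} {r₀ : ℝ} (hr₀ : 0 < r₀) (N : ℕ) (hN : 2 ≤ N) :
    ∃ ω : Finset (EuclideanSpace ℝ (Fin d)), ↑ω ⊆ ball x₀ r₀ ∧ ω.card = N ∧
      rieszEnergy s ω ≤ ENNReal.ofReal (
        ((2:ℝ)^s * (2*Real.sqrt d/r₀)^s * 2^d * (2 * ∑' n : ℕ, (n:ℝ)^(-(s/(d:ℝ))))^d)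
        * (N:ℝ)^(1 + s/(d:ℝ))) := by
  have dpos : (0:ℝ) < d := by exact_mod_cast hd
  have hd0 : (d:ℝ) ≠ 0 := dpos.ne'
  set p : ℝ := s / (d:ℝ) with hp
  have hp1 : 1 < p := (one_lt_div dpos).2 hs
  set Z : ℝ := ∑' n : ℕ, (n:ℝ)^(-p) with hZ
  have hZ1 : 1 ≤ Z := by
    have hg : Summable (fun n : ℕ => (n:ℝ) ^ (-p)) := Real.summable_nat_rpow.2 (by linarith)
    have := Summable.le_tsum hg 1 (fun n _ => Real.rpow_nonneg (Nat.cast_nonneg n) _)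
    simpa using this
  have hN1 : (1:ℝ) ≤ (N:ℝ) := by exact_mod_cast (by omega : 1 ≤ N)
  set m : ℕ := ⌈(N:ℝ)^((d:ℝ)⁻¹)⌉₊ with hm
  have hx1 : (1:ℝ) ≤ (N:ℝ)^((d:ℝ)⁻¹) := Real.one_le_rpow hN1 (by positivity)
  have hm1 : 1 ≤ m := Nat.one_le_ceil_iff.2 (by linarith)
  have hmR : (1:ℝ) ≤ (m:ℝ) := by exact_mod_cast hm1
  have hmge : (N:ℝ)^((d:ℝ)⁻¹) ≤ (m:ℝ) := Nat.le_ceil _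
  have hmle : (m:ℝ) ≤ 2 * (N:ℝ)^((d:ℝ)⁻¹) := by
    have := Nat.ceil_lt_add_one (by positivity : (0:ℝ) ≤ (N:ℝ)^((d:ℝ)⁻¹))
    rw [← hm] at this
    linarith
  have hNm : N ≤ m ^ d := by
    have h1 : (N:ℝ) ≤ ((m:ℝ))^(d:ℝ) := by
      calc (N:ℝ) = ((N:ℝ)^((d:ℝ)⁻¹))^(d:ℝ) := by
            rw [← Real.rpow_mul (by positivity), inv_mul_cancel₀ hd0, Real.rpow_one]
      _ ≤ ((m:ℝ))^(d:ℝ) := Real.rpow_le_rpow (by positivity) hmge (by positivity)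
    have h2 : ((m:ℝ))^(d:ℝ) = ((m^d : ℕ) : ℝ) := by
      rw [Real.rpow_natCast]; push_cast; ring
    rw [h2] at h1
    exact_mod_cast h1
  set h : ℝ := r₀ / ((m:ℝ) * Real.sqrt d) with hh
  have hsd : (0:ℝ) < Real.sqrt d := Real.sqrt_pos.2 dpos
  have hhpos : 0 < h := by positivity
  -- the grid
  set g : (Fin d → Fin m) → EuclideanSpace ℝ (Fin d) :=
    fun k => (WithLp.toLp 2 (fun i => x₀ i + h * (k i : ℝ)) : EuclideanSpace ℝ (Fin d)) with hg
  have hgcoord : ∀ k i, g k i - x₀ i = h * (k i : ℝ) := by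
    intro k i; rw [hg]; ring
  have hgsub : ∀ k k' i, g k i - g k' i = h * ((k i : ℝ) - (k' i : ℝ)) := by
    intro k k' i; rw [hg]; ring
  have hginj : Function.Injective g := by
    intro k k' hkk
    funext i
    have : g k i = g k' i := by rw [hkk]
    rw [hg] at this
    simp only at this
    have h2 : (k i : ℝ) = (k' i : ℝ) := by
      have := mul_left_cancel₀ hhpos.ne' (by linarith : h * (k i : ℝ) = h * (k' i : ℝ))
      exact this
    exact Fin.ext (by exact_mod_cast h2)
  have hgball : ∀ k, g k ∈ ball x₀ r₀ := by
    intro k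
    rw [mem_ball, EuclideanSpace.dist_eq]
    have hb : ∀ i : Fin d, dist (g k i) (x₀ i) ^ 2 ≤ (h * ((m:ℝ)-1))^2 := by
      intro i
      rw [Real.dist_eq]
      rw [sq_abs]
      have hki : (k i : ℝ) ≤ (m:ℝ) - 1 := by
        have := (k i).is_lt
        have : (k i : ℝ) + 1 ≤ (m:ℝ) := by exact_mod_cast this
        linarith
      have h1 : g k i - x₀ i = h * (k i : ℝ) := hgcoord k i
      rw [h1]
      have h2 : 0 ≤ h * (k i : ℝ) := by positivity
      have h3 : h * (k i : ℝ) ≤ h * ((m:ℝ)-1) := by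
        refine mul_le_mul_of_nonneg_left hki hhpos.le
      nlinarith
    calc √(∑ i, dist (g k i) (x₀ i) ^ 2) ≤ √(∑ _i : Fin d, (h * ((m:ℝ)-1))^2) :=
          Real.sqrt_le_sqrt (Finset.sum_le_sum fun i _ => hb i)
    _ = √((d:ℝ) * (h * ((m:ℝ)-1))^2) := by rw [Finset.sum_const, Finset.card_univ,
          Fintype.card_fin, nsmul_eq_mul]
    _ = Real.sqrt d * (h * ((m:ℝ)-1)) := by
          rw [Real.sqrt_mul (by positivity), Real.sqrt_sq (by nlinarith)]
    _ < r₀ := by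
          have hmr : Real.sqrt d * (h * ((m:ℝ)-1)) < Real.sqrt d * (h * (m:ℝ)) := by
            have : (m:ℝ) - 1 < (m:ℝ) := by linarith
            have := mul_lt_mul_of_pos_left this hhpos
            exact mul_lt_mul_of_pos_left this hsd
          have heq : Real.sqrt d * (h * (m:ℝ)) = r₀ := by
            rw [hh]; field_simp
          linarith
  -- distance lower bound coordinatewise
  have hdistge : ∀ (k k' : Fin d → Fin m) (i : Fin d),
      h * |(k i:ℝ) - (k' i:ℝ)| ≤ dist (g k) (g k') := by
    intro k k' i
    rw [EuclideanSpace.dist_eq]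
    have h1 : (h * |(k i:ℝ) - (k' i:ℝ)|)^2 ≤ ∑ j, dist (g k j) (g k' j) ^ 2 := by
      have he : dist (g k i) (g k' i) ^ 2 = (h * |(k i:ℝ) - (k' i:ℝ)|)^2 := by
        rw [Real.dist_eq, sq_abs, hgsub, mul_pow, mul_pow, sq_abs]
      refine le_trans ?_ (Finset.single_le_sum
        (f := fun j => dist (g k j) (g k' j) ^ 2) (fun j _ => sq_nonneg _) (Finset.mem_univ i))
      exact le_of_eq he.symm
    calc h * |(k i:ℝ) - (k' i:ℝ)| = √((h * |(k i:ℝ) - (k' i:ℝ)|)^2) :=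
          (Real.sqrt_sq (by positivity)).symm
    _ ≤ √(∑ j, dist (g k j) (g k' j) ^ 2) := Real.sqrt_le_sqrt h1
  -- term-wise bound
  have hterm : ∀ k k' : Fin d → Fin m,
      (if g k = g k' then 0 else edist (g k) (g k') ^ (-s)) ≤
      ENNReal.ofReal ((h^(-s) * 2^s) * ∏ i, (1 + |(k i:ℝ) - (k' i:ℝ)|)^(-p)) := by
    intro k k'
    rcases eq_or_ne k k' with rfl | hkk
    · rw [if_pos rfl]; exact zero_le'
    rw [if_neg (fun hgg => hkk (hginj hgg))]
    obtain ⟨i₀, hi₀⟩ := Function.ne_iff.1 hkk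
    set D : Fin d → ℝ := fun i => |(k i:ℝ) - (k' i:ℝ)| with hD
    have hune : (Finset.univ : Finset (Fin d)).Nonempty := ⟨i₀, Finset.mem_univ _⟩
    set M : ℝ := Finset.univ.sup' hune D with hM
    have hMD : ∀ i, D i ≤ M := fun i => Finset.le_sup' D (Finset.mem_univ i)
    have hM1 : 1 ≤ M := by
      have hne2 : (k i₀ : ℕ) ≠ (k' i₀ : ℕ) := fun hc => hi₀ (Fin.ext hc)
      have habs : (1:ℝ) ≤ |((k i₀ : ℕ):ℝ) - ((k' i₀ : ℕ):ℝ)| := by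
        rcases lt_or_gt_of_ne hne2 with hlt | hlt
        · have hc : ((k i₀ : ℕ):ℝ) + 1 ≤ ((k' i₀ : ℕ):ℝ) := by exact_mod_cast hlt
          rw [abs_sub_comm, abs_of_nonneg (by linarith)]
          linarith
        · have hc : ((k' i₀ : ℕ):ℝ) + 1 ≤ ((k i₀ : ℕ):ℝ) := by exact_mod_cast hlt
          rw [abs_of_nonneg (by linarith)]
          linarith
      exact habs.trans (hMD i₀)
    obtain ⟨j, _, hj⟩ := Finset.exists_mem_eq_sup' hune D
    have hdM : h * M ≤ dist (g k) (g k') := by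
      rw [hM, hj]; exact hdistge k k' j
    have hdpos : 0 < dist (g k) (g k') := lt_of_lt_of_le (by positivity) hdM
    -- real bound
    have hreal : dist (g k) (g k') ^ (-s) ≤ (h^(-s) * 2^s) * ∏ i, (1 + D i)^(-p) := by
      have hs0 : (0:ℝ) ≤ s := le_trans dpos.le hs.le
      have hb1 : dist (g k) (g k') ^ (-s) ≤ (h * M) ^ (-s) :=
        Real.rpow_le_rpow_of_nonpos (by positivity) hdM (by linarith)
      have hb2 : (h * M) ^ (-s) = h^(-s) * M^(-s) :=
        Real.mul_rpow hhpos.le (by linarith)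
      -- prod bound
      set P : ℝ := ∏ i, (1 + D i) with hP
      have hDnn : ∀ i, 0 ≤ D i := fun i => abs_nonneg _
      have hPpos : 0 < P := Finset.prod_pos fun i _ => by have := hDnn i; linarith
      have hPle : P ≤ (2*M)^d := by
        rw [hP]
        calc ∏ i, (1 + D i) ≤ ∏ _i : Fin d, (2*M) :=
              Finset.prod_le_prod (fun i _ => by have := hDnn i; linarith)
                (fun i _ => by have := hMD i; linarith)
        _ = (2*M)^d := by rw [Finset.prod_const, Finset.card_univ, Fintype.card_fin]
      have hPp : P ^ p ≤ (2*M)^s := by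
        calc P ^ p ≤ ((2*M)^d) ^ p :=
              Real.rpow_le_rpow hPpos.le hPle (by linarith)
        _ = (2*M)^s := by
              rw [← Real.rpow_natCast (2*M) d, ← Real.rpow_mul (by linarith)]
              congr 1
              rw [hp]; field_simp
      have hMs : M^(-s) ≤ 2^s * ∏ i, (1 + D i)^(-p) := by
        have h2M : (2*M)^(-s) ≤ P^(-p) := by
          rw [Real.rpow_neg (by linarith), Real.rpow_neg hPpos.le]
          exact inv_anti₀ (by positivity) hPp
        have hexp : ∏ i, (1 + D i)^(-p) = P^(-p) := by
          rw [hP]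
          exact Real.finset_prod_rpow _ _ (fun i _ => by have := hDnn i; linarith) _
        have h2e : M^(-s) = 2^s * (2*M)^(-s) := by
          rw [Real.mul_rpow (by norm_num) (by linarith)]
          rw [← mul_assoc, ← Real.rpow_add (by norm_num : (0:ℝ) < 2)]
          simp
        rw [h2e, hexp]
        exact mul_le_mul_of_nonneg_left h2M (by positivity)
      calc dist (g k) (g k') ^ (-s) ≤ h^(-s) * M^(-s) := by rw [← hb2]; exact hb1
      _ ≤ h^(-s) * (2^s * ∏ i, (1 + D i)^(-p)) :=
            mul_le_mul_of_nonneg_left hMs (by positivity)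
      _ = (h^(-s) * 2^s) * ∏ i, (1 + D i)^(-p) := by ring
    rw [edist_dist, ENNReal.ofReal_rpow_of_pos hdpos]
    exact ENNReal.ofReal_le_ofReal hreal
  have hZ0 : (0:ℝ) ≤ Z := by linarith
  -- the grid finset
  set G : Finset (EuclideanSpace ℝ (Fin d)) := Finset.univ.image g with hG
  have hGcard : G.card = m ^ d := by
    rw [hG, Finset.card_image_of_injective _ hginj, Finset.card_univ]
    simp
  have hGen : rieszEnergy s G = ∑ k : Fin d → Fin m, ∑ k' : Fin d → Fin m,
      (if g k = g k' then 0 else edist (g k) (g k') ^ (-s)) := by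
    rw [rieszEnergy, hG, Finset.sum_image (fun x _ y _ hxy => hginj hxy)]
    exact Finset.sum_congr rfl fun k _ => by
      convert Finset.sum_image (f := fun y => if g k = y then 0 else edist (g k) y ^ (-s))
        (fun x _ y _ hxy => hginj hxy)
  have hinner : ∀ k : Fin d → Fin m,
      ∑ k' : Fin d → Fin m, ∏ i, (1 + |(k i:ℝ) - (k' i:ℝ)|)^(-p) ≤ (2*Z)^d := by
    intro k
    have hfact := Finset.sum_prod_piFinset (Finset.univ : Finset (Fin m))
      (fun (i : Fin d) (t : Fin m) => ((1:ℝ) + |(k i:ℝ) - (t:ℝ)|)^(-p))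
    rw [Fintype.piFinset_univ] at hfact
    rw [hfact]
    calc ∏ i, ∑ t : Fin m, ((1:ℝ) + |(k i:ℝ) - (t:ℝ)|)^(-p)
        ≤ ∏ _i : Fin d, (2*Z) := by
          refine Finset.prod_le_prod
            (fun i _ => Finset.sum_nonneg fun t _ => Real.rpow_nonneg (by positivity) _)
            (fun i _ => ?_)
          have hcs := coord_sum_bound hp1 m (k i : ℕ)
          rw [← Fin.sum_univ_eq_sum_range
            (fun t => ((1:ℝ) + |((k i : ℕ):ℝ) - (t:ℝ)|)^(-p)) m] at hcs
          rw [← hZ] at hcs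
          exact hcs
    _ = (2*Z)^d := by rw [Finset.prod_const, Finset.card_univ, Fintype.card_fin]
  have hsum_real : ∑ k : Fin d → Fin m, ∑ k' : Fin d → Fin m,
      ((h^(-s) * 2^s) * ∏ i, (1 + |(k i:ℝ) - (k' i:ℝ)|)^(-p))
      ≤ (h^(-s) * 2^s) * (((m^d : ℕ):ℝ) * (2*Z)^d) := by
    have hc0 : (0:ℝ) ≤ h^(-s) * 2^s := by positivity
    calc ∑ k : Fin d → Fin m, ∑ k' : Fin d → Fin m,
        ((h^(-s) * 2^s) * ∏ i, (1 + |(k i:ℝ) - (k' i:ℝ)|)^(-p))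
        = (h^(-s) * 2^s) * ∑ k : Fin d → Fin m, ∑ k' : Fin d → Fin m,
            ∏ i, (1 + |(k i:ℝ) - (k' i:ℝ)|)^(-p) := by
          rw [Finset.mul_sum]
          exact Finset.sum_congr rfl fun k _ => by rw [Finset.mul_sum]
    _ ≤ (h^(-s) * 2^s) * ∑ _k : Fin d → Fin m, (2*Z)^d := by
          refine mul_le_mul_of_nonneg_left ?_ hc0
          exact Finset.sum_le_sum fun k _ => hinner k
    _ = (h^(-s) * 2^s) * (((m^d : ℕ):ℝ) * (2*Z)^d) := by
          rw [Finset.sum_const, Finset.card_univ, nsmul_eq_mul]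
          congr 2
          simp
  have hGle : rieszEnergy s G ≤
      ENNReal.ofReal ((h^(-s) * 2^s) * (((m^d : ℕ):ℝ) * (2*Z)^d)) := by
    rw [hGen]
    have hnn : ∀ (k k' : Fin d → Fin m),
        0 ≤ (h^(-s) * 2^s) * ∏ i, (1 + |(k i:ℝ) - (k' i:ℝ)|)^(-p) := by
      intro k k'
      refine mul_nonneg (by positivity) (Finset.prod_nonneg fun i _ =>
        Real.rpow_nonneg (by positivity) _)
    calc ∑ k : Fin d → Fin m, ∑ k' : Fin d → Fin m,
        (if g k = g k' then 0 else edist (g k) (g k') ^ (-s))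
        ≤ ∑ k : Fin d → Fin m, ∑ k' : Fin d → Fin m,
          ENNReal.ofReal ((h^(-s) * 2^s) * ∏ i, (1 + |(k i:ℝ) - (k' i:ℝ)|)^(-p)) :=
          Finset.sum_le_sum fun k _ => Finset.sum_le_sum fun k' _ => hterm k k'
    _ = ENNReal.ofReal (∑ k : Fin d → Fin m, ∑ k' : Fin d → Fin m,
          ((h^(-s) * 2^s) * ∏ i, (1 + |(k i:ℝ) - (k' i:ℝ)|)^(-p))) := by
          rw [ENNReal.ofReal_sum_of_nonneg
            (fun k _ => Finset.sum_nonneg fun k' _ => hnn k k')]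
          exact Finset.sum_congr rfl fun k _ =>
            (ENNReal.ofReal_sum_of_nonneg (fun k' _ => hnn k k')).symm
    _ ≤ ENNReal.ofReal ((h^(-s) * 2^s) * (((m^d : ℕ):ℝ) * (2*Z)^d)) :=
          ENNReal.ofReal_le_ofReal hsum_real
  -- choose the configuration
  have hNG : N ≤ G.card := by rw [hGcard]; exact hNm
  obtain ⟨ω, hωG, hωcard⟩ := Finset.exists_subset_card_eq hNG
  refine ⟨ω, ?_, hωcard, ?_⟩
  · intro x hx
    obtain ⟨k, _, rfl⟩ := Finset.mem_image.1 (hωG hx)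
    exact hgball k
  refine le_trans (rieszEnergy_mono s hωG) (le_trans hGle (ENNReal.ofReal_le_ofReal ?_))
  -- final real computation
  have hs0 : (0:ℝ) ≤ s := le_trans dpos.le hs.le
  have hNdpow : ((N:ℝ)^((d:ℝ)⁻¹))^(d:ℕ) = (N:ℝ) := by
    rw [← Real.rpow_natCast ((N:ℝ)^((d:ℝ)⁻¹)) d, ← Real.rpow_mul (by positivity),
      inv_mul_cancel₀ hd0, Real.rpow_one]
  have hNp : ((N:ℝ)^((d:ℝ)⁻¹))^s = (N:ℝ)^p := by
    rw [← Real.rpow_mul (by positivity)]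
    congr 1
    rw [hp]; ring
  have hhinv : h^(-s) ≤ (2*Real.sqrt d/r₀)^s * (N:ℝ)^p := by
    have hb : h⁻¹ = (m:ℝ) * Real.sqrt d / r₀ := by
      rw [hh]; field_simp
    have hb2 : h⁻¹ ≤ (2*Real.sqrt d/r₀) * (N:ℝ)^((d:ℝ)⁻¹) := by
      rw [hb]
      have h1 : (m:ℝ) * Real.sqrt d ≤ (2 * (N:ℝ)^((d:ℝ)⁻¹)) * Real.sqrt d :=
        mul_le_mul_of_nonneg_right hmle hsd.le
      calc (m:ℝ) * Real.sqrt d / r₀ ≤ (2 * (N:ℝ)^((d:ℝ)⁻¹)) * Real.sqrt d / r₀ :=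
            (div_le_div_iff_of_pos_right hr₀).2 h1
      _ = (2*Real.sqrt d/r₀) * (N:ℝ)^((d:ℝ)⁻¹) := by ring
    calc h^(-s) = (h⁻¹)^s := by
          rw [Real.rpow_neg hhpos.le, ← Real.inv_rpow hhpos.le]
    _ ≤ ((2*Real.sqrt d/r₀) * (N:ℝ)^((d:ℝ)⁻¹))^s :=
          Real.rpow_le_rpow (by positivity) hb2 hs0
    _ = (2*Real.sqrt d/r₀)^s * (N:ℝ)^p := by
          rw [Real.mul_rpow (by positivity) (by positivity), hNp]
  have hmd : ((m^d:ℕ):ℝ) ≤ 2^d * (N:ℝ) := by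
    have h1 : ((m^d:ℕ):ℝ) = ((m:ℝ))^d := by push_cast; ring
    rw [h1, ← hNdpow, ← mul_pow]
    exact pow_le_pow_left₀ (by positivity) hmle d
  have e1 : h^(-s) * 2^s * (((m^d:ℕ):ℝ) * (2*Z)^d)
      ≤ ((2*Real.sqrt d/r₀)^s * (N:ℝ)^p) * 2^s * ((2^d * (N:ℝ)) * (2*Z)^d) := by
    have n1 : (0:ℝ) ≤ (2*Z)^d := pow_nonneg (by linarith) d
    have n2 : (0:ℝ) ≤ (2:ℝ)^s := Real.rpow_nonneg (by norm_num) s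
    refine mul_le_mul (mul_le_mul_of_nonneg_right hhinv n2)
      (mul_le_mul_of_nonneg_right hmd n1)
      (mul_nonneg (Nat.cast_nonneg _) n1) (by positivity)
  calc h^(-s) * 2^s * (((m^d:ℕ):ℝ) * (2*Z)^d)
      ≤ ((2*Real.sqrt d/r₀)^s * (N:ℝ)^p) * 2^s * ((2^d * (N:ℝ)) * (2*Z)^d) := e1
  _ = ((2:ℝ)^s * (2*Real.sqrt d/r₀)^s * 2^d * (2*Z)^d) * (N:ℝ)^(1+p) := by
      rw [Real.rpow_add (by positivity : (0:ℝ) < (N:ℝ)), Real.rpow_one]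
      ring


/-- for bounded `A ⊆ ℝ^d` with nonempty interior and `s > d`, the minimal
`s`-energy grows like `N^{1+s/d}`. -/
theorem minRieszEnergy_growth (d : ℕ) (hd : 1 ≤ d) (s : ℝ) (hs : (d : ℝ) < s)
    (A : Set (EuclideanSpace ℝ (Fin d))) (hA : Bornology.IsBounded A)
    (hint : (interior A).Nonempty) :
    ∃ C₀ C₁ : ℝ, 0 < C₀ ∧ 0 < C₁ ∧ ∀ N : ℕ, 2 ≤ N →
      ENNReal.ofReal (C₀ * (N : ℝ) ^ (1 + s / (d : ℝ))) ≤ minRieszEnergy s A N ∧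
      minRieszEnergy s A N ≤ ENNReal.ofReal (C₁ * (N : ℝ) ^ (1 + s / (d : ℝ))) := by
  have dpos : (0:ℝ) < d := by exact_mod_cast hd
  obtain ⟨x₀, hx₀⟩ := hint
  obtain ⟨r₀, hr₀pos, hball⟩ := Metric.isOpen_iff.1 isOpen_interior x₀ hx₀
  have hballA : ball x₀ r₀ ⊆ A := hball.trans interior_subset
  obtain ⟨R', hR'⟩ := hA.subset_closedBall (0 : EuclideanSpace ℝ (Fin d))
  set R : ℝ := max R' 1 with hRdef
  have hR : 0 < R := lt_of_lt_of_le one_pos (le_max_right _ _)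
  have hAR : A ⊆ closedBall (0 : EuclideanSpace ℝ (Fin d)) R :=
    hR'.trans (closedBall_subset_closedBall (le_max_left _ _))
  set K : ℝ := ((volume (closedBall (0:EuclideanSpace ℝ (Fin d)) (2*R)) /
    volume (ball (0:EuclideanSpace ℝ (Fin d)) 1)).toReal + 1) with hKdef
  have hK0 : 0 < K := by positivity
  set Z : ℝ := ∑' n : ℕ, (n:ℝ)^(-(s/(d:ℝ))) with hZdef
  have hZ1 : 1 ≤ Z := by
    have hp1 : 1 < s/(d:ℝ) := (one_lt_div dpos).2 hs
    have hg : Summable (fun n : ℕ => (n:ℝ) ^ (-(s/(d:ℝ)))) :=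
      Real.summable_nat_rpow.2 (by linarith)
    have := Summable.le_tsum hg 1 (fun n _ => Real.rpow_nonneg (Nat.cast_nonneg n) _)
    simpa using this
  have hsd : (0:ℝ) < Real.sqrt d := Real.sqrt_pos.2 dpos
  refine ⟨((2:ℝ)^d * K)^(-(s/(d:ℝ))),
    (2:ℝ)^s * (2*Real.sqrt d/r₀)^s * 2^d * (2*Z)^d,
    Real.rpow_pos_of_pos (by positivity) _, ?_, fun N hN => ⟨?_, ?_⟩⟩
  · have h1 : (0:ℝ) < (2:ℝ)^s := Real.rpow_pos_of_pos (by norm_num) s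
    have h2 : (0:ℝ) < (2*Real.sqrt d/r₀)^s := Real.rpow_pos_of_pos (by positivity) s
    have h3 : (0:ℝ) < (2*Z)^d := pow_pos (by linarith) d
    positivity
  · -- lower bound
    refine le_iInf fun ω => le_iInf fun hsub => le_iInf fun hcard => ?_
    have hb := energy_lower hd hs hR K le_rfl ω
      (fun x hx => hAR (hsub hx)) (by omega)
    rw [hcard] at hb
    exact hb
  · -- upper bound
    obtain ⟨ω, hsub, hcard, hle⟩ := energy_upper hd hs hr₀pos N hN
    have hsubA : (↑ω : Set (EuclideanSpace ℝ (Fin d))) ⊆ A := hsub.trans hballA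
    calc minRieszEnergy s A N
        ≤ ⨅ (_ : (↑ω : Set (EuclideanSpace ℝ (Fin d))) ⊆ A) (_ : ω.card = N),
          rieszEnergy s ω := iInf_le _ ω
    _ ≤ ⨅ (_ : ω.card = N), rieszEnergy s ω := iInf_le _ hsubA
    _ ≤ rieszEnergy s ω := iInf_le _ hcard
    _ ≤ _ := hle
end

section
/- Fix integers 1 ≤ d ≤ d' and a real s ≥ d. Let A and B be bounded subsets of ℝ^{d'}, and set g_A = liminf_{N→∞} ℰ_s(A,N)/τ_{s,d}(N) and g_B = liminf_{N→∞} ℰ_s(B,N)/τ_{s,d}(N), both taken in the extended nonnegative reals [0,∞]. Then liminf_{N→∞} ℰ_s(A∪B,N)/τ_{s,d}(N) ≥ (g_A^{−d/s} + g_B^{−d/s})^{−s/d}, where the right-hand side is interpreted in [0,∞] with the conventions ∞^{−d/s} = 0 and 0^{−s/d} = ∞ (so it equals g_B if g_A = ∞, equals g_A if g_B = ∞, and equals ∞ if both are ∞). -/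
open scoped ENNReal NNReal BigOperators Classical
open MeasureTheory Filter Metric Set Topology

/-- The normalizing sequence `τ_{s,d}(N)`: `N^{1+s/d}` for `s > d` and `N² log N` for `s = d`. -/
noncomputable def tauNorm (s : ℝ) (d : ℕ) (N : ℕ) : ℝ :=
  if s = (d : ℝ) then (N : ℝ) ^ 2 * Real.log N else (N : ℝ) ^ (1 + s / (d : ℝ))

set_option maxHeartbeats 1000000

section FinsetAux

variable {E : Type*} [PseudoEMetricSpace E]

lemma rieszEnergy_sdiff_add_le (s : ℝ) (ω ωA : Finset E) (h : ωA ⊆ ω) :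
    rieszEnergy s ωA + rieszEnergy s (ω \ ωA) ≤ rieszEnergy s ω := by
  classical
  have key : ∀ t : Finset E, t ⊆ ω →
      rieszEnergy s t ≤
        ∑ x ∈ t, ∑ y ∈ ω, (if x = y then 0 else edist x y ^ (-s)) := by
    intro t ht
    exact Finset.sum_le_sum fun x _ => Finset.sum_le_sum_of_subset ht
  calc rieszEnergy s ωA + rieszEnergy s (ω \ ωA)
      ≤ (∑ x ∈ ωA, ∑ y ∈ ω, (if x = y then 0 else edist x y ^ (-s)))
        + ∑ x ∈ ω \ ωA, ∑ y ∈ ω, (if x = y then 0 else edist x y ^ (-s)) :=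
        add_le_add (key ωA h) (key _ Finset.sdiff_subset)
    _ = rieszEnergy s ω := by
        rw [add_comm]; exact Finset.sum_sdiff h

lemma minRieszEnergy_le (s : ℝ) (A : Set E) (ω : Finset E) (hsub : ↑ω ⊆ A) :
    minRieszEnergy s A ω.card ≤ rieszEnergy s ω := by
  refine iInf_le_of_le ω (iInf_le_of_le hsub ?_)
  exact iInf_le_of_le rfl le_rfl

lemma le_minRieszEnergy_union (s : ℝ) (A B : Set E) (N : ℕ) (x : ℝ≥0∞)
    (h : ∀ k ≤ N, x ≤ minRieszEnergy s A k + minRieszEnergy s B (N - k)) :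
    x ≤ minRieszEnergy s (A ∪ B) N := by
  refine le_iInf fun ω => le_iInf fun hsub => le_iInf fun hcard => ?_
  classical
  set ωA := ω.filter (· ∈ A) with hωA
  have hsubA : ↑ωA ⊆ A := by
    intro x hx
    simp only [hωA, Finset.coe_filter, Set.mem_setOf_eq] at hx
    exact hx.2
  have hsubB : ↑(ω \ ωA) ⊆ B := by
    intro x hx
    simp only [Finset.coe_sdiff, Set.mem_diff, Finset.mem_coe, hωA,
      Finset.mem_filter, not_and] at hx
    rcases hsub hx.1 with hxA | hxB
    · exact absurd hxA (hx.2 (by exact_mod_cast hx.1))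
    · exact hxB
  have hk : ωA.card ≤ N := hcard ▸ Finset.card_filter_le _ _
  have hkB : (ω \ ωA).card = N - ωA.card := by
    rw [Finset.card_sdiff_of_subset (Finset.filter_subset _ _), hcard]
  calc x ≤ minRieszEnergy s A ωA.card + minRieszEnergy s B (N - ωA.card) := h _ hk
    _ ≤ rieszEnergy s ωA + rieszEnergy s (ω \ ωA) := by
        refine add_le_add (minRieszEnergy_le s A ωA hsubA) ?_
        have h2 := minRieszEnergy_le s B (ω \ ωA) hsubB
        rwa [hkB] at h2
    _ ≤ rieszEnergy s ω := rieszEnergy_sdiff_add_le s ω ωA (Finset.filter_subset _ _)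

end FinsetAux

section RealAux

lemma riesz_rpow_roundtrip {σ x : ℝ} (hσ : σ ≠ 0) (hx : 0 < x) :
    (x ^ (-(1 / σ))) ^ (-σ) = x := by
  rw [← Real.rpow_mul hx.le]
  have h1 : -(1 / σ) * -σ = 1 := by field_simp
  rw [h1, Real.rpow_one]

lemma riesz_convex_bound {σ a b t u : ℝ} (hσ : 1 ≤ σ) (ha : 0 < a) (hb : 0 < b)
    (ht : 0 ≤ t) (hu : 0 ≤ u) :
    (a ^ (-(1 / σ)) + b ^ (-(1 / σ))) ^ (-σ) * (t + u) ^ (1 + σ) ≤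
      a * t ^ (1 + σ) + b * u ^ (1 + σ) := by
  have hσ0 : 0 < σ := lt_of_lt_of_le one_pos hσ
  set p := 1 + σ with hpdef
  have hp1 : 1 ≤ p := by simp only [hpdef]; linarith
  have ha' : 0 < a ^ (-(1 / σ)) := Real.rpow_pos_of_pos ha _
  have hb' : 0 < b ^ (-(1 / σ)) := Real.rpow_pos_of_pos hb _
  set S := a ^ (-(1 / σ)) + b ^ (-(1 / σ)) with hSdef
  have hS : 0 < S := add_pos ha' hb'
  have hSσ : 0 < S ^ σ := Real.rpow_pos_of_pos hS _
  -- the key coefficient computation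
  have hkey : ∀ x w : ℝ, 0 < x → 0 ≤ w →
      (x ^ (-(1 / σ)) / S) * (w / (x ^ (-(1 / σ)) / S)) ^ p = x * S ^ σ * w ^ p := by
    intro x w hx hw
    have hx' : 0 < x ^ (-(1 / σ)) := Real.rpow_pos_of_pos hx _
    set γ := x ^ (-(1 / σ)) / S with hγdef
    have hγ : 0 < γ := div_pos hx' hS
    rw [Real.div_rpow hw hγ.le]
    have h2 : γ * (w ^ p / γ ^ p) = w ^ p * (γ ^ (1:ℝ) / γ ^ p) := by
      rw [Real.rpow_one]; ring
    rw [h2, ← Real.rpow_sub hγ]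
    have h3 : (1:ℝ) - p = -σ := by simp [hpdef]
    rw [h3, hγdef, Real.div_rpow hx'.le hS.le, riesz_rpow_roundtrip hσ0.ne' hx,
      Real.rpow_neg hS.le, div_inv_eq_mul]
    ring
  -- convexity
  set α := a ^ (-(1 / σ)) / S with hαdef
  set β := b ^ (-(1 / σ)) / S with hβdef
  have hα : 0 < α := div_pos ha' hS
  have hβ : 0 < β := div_pos hb' hS
  have hαβ : α + β = 1 := by
    rw [hαdef, hβdef, ← add_div, hSdef, div_self hS.ne']
  have hconv := (convexOn_rpow hp1).2 (Set.mem_Ici.2 (div_nonneg ht hα.le))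
    (Set.mem_Ici.2 (div_nonneg hu hβ.le)) hα.le hβ.le hαβ
  simp only [smul_eq_mul] at hconv
  have hsum : α * (t / α) + β * (u / β) = t + u := by
    field_simp
  rw [hsum, hkey a t ha ht, hkey b u hb hu] at hconv
  -- multiply by S ^ (-σ)
  have hmul := mul_le_mul_of_nonneg_left hconv (Real.rpow_nonneg hS.le (-σ))
  calc S ^ (-σ) * (t + u) ^ p ≤ S ^ (-σ) * (a * S ^ σ * t ^ p + b * S ^ σ * u ^ p) := hmul
    _ = (S ^ (-σ) * S ^ σ) * (a * t ^ p + b * u ^ p) := by ring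
    _ = a * t ^ p + b * u ^ p := by
        rw [Real.rpow_neg hS.le, inv_mul_cancel₀ hSσ.ne', one_mul]

lemma riesz_c_le_left {σ a b : ℝ} (hσ0 : 0 < σ) (ha : 0 < a) (hb : 0 < b) :
    (a ^ (-(1 / σ)) + b ^ (-(1 / σ))) ^ (-σ) ≤ a := by
  have ha' : 0 < a ^ (-(1 / σ)) := Real.rpow_pos_of_pos ha _
  have hb' : 0 < b ^ (-(1 / σ)) := Real.rpow_pos_of_pos hb _
  have h1 : (a ^ (-(1 / σ)) + b ^ (-(1 / σ))) ^ (-σ) ≤ (a ^ (-(1 / σ))) ^ (-σ) :=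
    Real.rpow_le_rpow_of_nonpos ha' (le_add_of_nonneg_right hb'.le) (neg_nonpos.2 hσ0.le)
  rwa [riesz_rpow_roundtrip hσ0.ne' ha] at h1

lemma riesz_c_le_right {σ a b : ℝ} (hσ0 : 0 < σ) (ha : 0 < a) (hb : 0 < b) :
    (a ^ (-(1 / σ)) + b ^ (-(1 / σ))) ^ (-σ) ≤ b := by
  rw [add_comm]; exact riesz_c_le_left hσ0 hb ha

lemma tauNorm_nonneg (s : ℝ) (d : ℕ) (N : ℕ) : 0 ≤ tauNorm s d N := by
  unfold tauNorm; split
  · exact mul_nonneg (sq_nonneg _) (Real.log_natCast_nonneg N)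
  · exact Real.rpow_nonneg (Nat.cast_nonneg N) _

lemma tauNorm_mono {s : ℝ} {d : ℕ} (hsd : 0 ≤ s / (d : ℝ)) {m n : ℕ} (h : m ≤ n) :
    tauNorm s d m ≤ tauNorm s d n := by
  unfold tauNorm; split
  · refine mul_le_mul (pow_le_pow_left₀ (Nat.cast_nonneg m) (Nat.cast_le.2 h) 2) ?_
      (Real.log_natCast_nonneg m) (sq_nonneg _)
    rcases Nat.eq_zero_or_pos m with rfl | hm
    · simpa using Real.log_natCast_nonneg n
    · exact Real.log_le_log (by exact_mod_cast hm) (Nat.cast_le.2 h)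
  · exact Real.rpow_le_rpow (Nat.cast_nonneg m) (Nat.cast_le.2 h) (by linarith)

lemma tauNorm_pos {s : ℝ} {d : ℕ} {n : ℕ} (hn : 2 ≤ n) : 0 < tauNorm s d n := by
  have hn0 : (0:ℝ) < n := by exact_mod_cast Nat.lt_of_lt_of_le (by norm_num) hn
  unfold tauNorm; split
  · refine mul_pos (by positivity) (Real.log_pos ?_)
    exact_mod_cast Nat.lt_of_lt_of_le (by norm_num) hn
  · exact Real.rpow_pos_of_pos hn0 _

lemma sq_mul_log_lower (k N : ℕ) (hk : k ≤ N) :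
    (k : ℝ) ^ 2 * Real.log N - (N : ℝ) ^ 2 ≤ (k : ℝ) ^ 2 * Real.log k := by
  rcases Nat.eq_zero_or_pos k with rfl | hk0
  · simp [sq_nonneg]
  · have hk0' : (0:ℝ) < k := by exact_mod_cast hk0
    have hkN : (k:ℝ) ≤ N := Nat.cast_le.2 hk
    have hN0 : (0:ℝ) < N := lt_of_lt_of_le hk0' hkN
    have hlog : Real.log N - Real.log k ≤ (N:ℝ) / k - 1 := by
      rw [← Real.log_div hN0.ne' hk0'.ne']
      exact Real.log_le_sub_one_of_pos (div_pos hN0 hk0')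
    have h1 : (k:ℝ)^2 * (Real.log N - Real.log k) ≤ (k:ℝ)^2 * ((N:ℝ)/k - 1) :=
      mul_le_mul_of_nonneg_left hlog (sq_nonneg _)
    have h2 : (k:ℝ)^2 * ((N:ℝ)/k - 1) ≤ (N:ℝ)^2 := by
      have he : (k:ℝ)^2 * ((N:ℝ)/k - 1) = k * N - k^2 := by
        field_simp
      rw [he]; nlinarith
    nlinarith [h1, h2]

end RealAux

section CoreAux

lemma riesz_core1 {s : ℝ} {d : ℕ} (hd : 1 ≤ d) (hs : (d : ℝ) ≤ s) {a b ε : ℝ}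
    (ha : 0 < a) (hb : 0 < b) (hε : 0 < ε) :
    ∀ᶠ N : ℕ in atTop, ∀ k ≤ N,
      ((a ^ (-(1 / (s / (d : ℝ)))) + b ^ (-(1 / (s / (d : ℝ))))) ^ (-(s / (d : ℝ))) - ε)
          * tauNorm s d N ≤
        a * tauNorm s d k + b * tauNorm s d (N - k) := by
  have hd0 : (0:ℝ) < d := by exact_mod_cast hd
  have hσ : 1 ≤ s / (d : ℝ) := (one_le_div hd0).2 hs
  set σ := s / (d : ℝ) with hσdef
  set c := (a ^ (-(1 / σ)) + b ^ (-(1 / σ))) ^ (-σ) with hcdef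
  rcases eq_or_lt_of_le hs with hsd | hsd
  · -- s = d
    have hsd' : s = (d : ℝ) := hsd.symm
    have hσ1 : σ = 1 := by rw [hσdef, hsd', div_self hd0.ne']
    have htau : ∀ n : ℕ, tauNorm s d n = (n : ℝ) ^ 2 * Real.log n := fun n => if_pos hsd'
    obtain ⟨n₀, hn₀⟩ := exists_nat_ge (Real.exp ((a + b) / ε))
    filter_upwards [eventually_ge_atTop (max n₀ 1)] with N hN k hkN
    have hN1 : 1 ≤ N := le_trans (le_max_right _ _) hN
    have hN0 : (0:ℝ) < N := by exact_mod_cast hN1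
    have hNexp : Real.exp ((a + b) / ε) ≤ N :=
      hn₀.trans (Nat.cast_le.2 (le_trans (le_max_left _ _) hN))
    have hlogN : (a + b) / ε ≤ Real.log N := (Real.le_log_iff_exp_le hN0).2 hNexp
    have hlogN0 : 0 ≤ Real.log N := Real.log_natCast_nonneg N
    -- convexity at p = 2
    have hcast : ((N - k : ℕ) : ℝ) = (N : ℝ) - k := by
      rw [Nat.cast_sub hkN]
    have hconv := riesz_convex_bound (a := a) (b := b) (t := (k:ℝ)) (u := ((N - k : ℕ) : ℝ))
      hσ ha hb (Nat.cast_nonneg k) (Nat.cast_nonneg _)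
    have hsum : (k : ℝ) + ((N - k : ℕ) : ℝ) = (N : ℝ) := by rw [hcast]; ring
    rw [hsum, ← hcdef] at hconv
    have h2σ : (1:ℝ) + σ = 2 := by rw [hσ1]; norm_num
    rw [h2σ] at hconv
    simp only [Real.rpow_two] at hconv
    -- hconv : c * N^2 ≤ a * k^2 + b * (N-k)^2
    clear_value σ c
    have hA := sq_mul_log_lower k N hkN
    have hB := sq_mul_log_lower (N - k) N (Nat.sub_le N k)
    rw [htau, htau, htau]
    have h2 : c * ((N:ℝ)^2) * Real.log N ≤ (a * (k:ℝ)^2 + b * ((N-k:ℕ):ℝ)^2) * Real.log N :=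
      mul_le_mul_of_nonneg_right hconv hlogN0
    have h3 : (a + b) * (N:ℝ)^2 ≤ ε * ((N:ℝ)^2 * Real.log N) := by
      have h4 : a + b ≤ ε * Real.log N := by
        rw [div_le_iff₀ hε] at hlogN; linarith [mul_comm ε (Real.log N)]
      nlinarith [sq_nonneg (N:ℝ)]
    have h5 := mul_le_mul_of_nonneg_left hA ha.le
    have h6 := mul_le_mul_of_nonneg_left hB hb.le
    nlinarith [h2, h3, h5, h6]
  · -- d < s
    have hsne : s ≠ (d : ℝ) := (ne_of_gt hsd)
    have htau : ∀ n : ℕ, tauNorm s d n = (n : ℝ) ^ (1 + s / (d:ℝ)) := fun n => if_neg hsne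
    refine Eventually.of_forall fun N k hkN => ?_
    have hcast : ((N - k : ℕ) : ℝ) = (N : ℝ) - k := by rw [Nat.cast_sub hkN]
    have hconv := riesz_convex_bound (a := a) (b := b) (t := (k:ℝ)) (u := ((N - k : ℕ) : ℝ))
      hσ ha hb (Nat.cast_nonneg k) (Nat.cast_nonneg _)
    have hsum : (k : ℝ) + ((N - k : ℕ) : ℝ) = (N : ℝ) := by rw [hcast]; ring
    rw [hsum] at hconv
    rw [htau, htau, htau]
    have h1 : (c - ε) * (N:ℝ) ^ (1 + s / (d:ℝ)) ≤ c * (N:ℝ) ^ (1 + s / (d:ℝ)) := by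
      have := Real.rpow_nonneg (Nat.cast_nonneg N) (1 + s / (d:ℝ))
      nlinarith
    exact h1.trans hconv

lemma riesz_core2 {s : ℝ} {d : ℕ} (hd : 1 ≤ d) (hs : (d : ℝ) ≤ s) {r c ε : ℝ} (hr : 0 < r)
    (hcr : c ≤ r) (hε : 0 < ε) (M : ℕ) :
    ∀ᶠ N : ℕ in atTop, ∀ j : ℕ, N - M ≤ j → j ≤ N →
      (c - ε) * tauNorm s d N ≤ r * tauNorm s d j := by
  have hd0 : (0:ℝ) < d := by exact_mod_cast hd
  have hσ : 1 ≤ s / (d : ℝ) := (one_le_div hd0).2 hs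
  have hσ0 : 0 ≤ s / (d : ℝ) := le_trans zero_le_one hσ
  suffices h : ∀ᶠ N : ℕ in atTop, (c - ε) * tauNorm s d N ≤ r * tauNorm s d (N - M) by
    filter_upwards [h] with N hN j hj _
    exact hN.trans (mul_le_mul_of_nonneg_left (tauNorm_mono hσ0 hj) hr.le)
  by_cases hce : c - ε ≤ 0
  · exact Eventually.of_forall fun N =>
      (mul_nonpos_of_nonpos_of_nonneg hce (tauNorm_nonneg s d N)).trans
        (mul_nonneg hr.le (tauNorm_nonneg s d _))
  push_neg at hce
  rcases eq_or_lt_of_le hs with hsd | hsd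
  · -- s = d
    have hsd' : s = (d : ℝ) := hsd.symm
    have htau : ∀ n : ℕ, tauNorm s d n = (n : ℝ) ^ 2 * Real.log n := fun n => if_pos hsd'
    set ρ := (c - ε / 2) / r with hρdef
    have hρ0 : 0 < ρ := div_pos (by linarith) hr
    have hρ1 : ρ < 1 := (div_lt_one hr).2 (by linarith)
    set θ := Real.sqrt ρ with hθdef
    have hθ0 : 0 < θ := Real.sqrt_pos.2 hρ0
    have hθsq : θ ^ 2 = ρ := Real.sq_sqrt hρ0.le
    have hθ1 : θ < 1 := by nlinarith
    obtain ⟨n₀, hn₀⟩ := exists_nat_ge (max ((M : ℝ) / (1 - θ)) (Real.exp (2 * r / ε)))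
    filter_upwards [eventually_ge_atTop (max n₀ (M + 1))] with N hN
    have hNM : M + 1 ≤ N := le_trans (le_max_right _ _) hN
    have hNn₀ : (n₀ : ℝ) ≤ N := Nat.cast_le.2 (le_trans (le_max_left _ _) hN)
    have hN0 : (0:ℝ) < N := by
      have : 1 ≤ N := by omega
      exact_mod_cast this
    have hN1 : (M : ℝ) / (1 - θ) ≤ N := le_trans (le_trans (le_max_left _ _) hn₀) hNn₀
    have hN2 : Real.exp (2 * r / ε) ≤ N := le_trans (le_trans (le_max_right _ _) hn₀) hNn₀
    have hlogN : 2 * r / ε ≤ Real.log N := (Real.le_log_iff_exp_le hN0).2 hN2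
    have hlogN0 : 0 ≤ Real.log N := Real.log_natCast_nonneg N
    have hcastNM : ((N - M : ℕ) : ℝ) = (N : ℝ) - M := by
      rw [Nat.cast_sub (by omega)]
    have hθN : θ * N ≤ ((N - M : ℕ) : ℝ) := by
      rw [hcastNM]
      rw [div_le_iff₀ (by linarith : (0:ℝ) < 1 - θ)] at hN1
      nlinarith
    have hu0 : (0:ℝ) ≤ ((N - M : ℕ) : ℝ) := Nat.cast_nonneg _
    have hrρ : r * ρ = c - ε / 2 := by
      rw [hρdef, mul_comm, div_mul_cancel₀ _ hr.ne']
    clear_value ρ θ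
    have hsq : ρ * (N:ℝ)^2 ≤ ((N - M : ℕ) : ℝ)^2 := by
      have hmul : (θ * N) * (θ * N) ≤ ((N - M : ℕ) : ℝ) * ((N - M : ℕ) : ℝ) :=
        mul_le_mul hθN hθN (by positivity) hu0
      nlinarith [hmul, hθsq]
    have hL := sq_mul_log_lower (N - M) N (Nat.sub_le _ _)
    rw [htau, htau]
    have h5 := mul_le_mul_of_nonneg_left hL hr.le
    have h6 : (c - ε / 2) * ((N:ℝ)^2 * Real.log N) ≤ r * (((N - M : ℕ):ℝ)^2 * Real.log N) := by
      have h6a := mul_le_mul_of_nonneg_left (mul_le_mul_of_nonneg_right hsq hlogN0) hr.le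
      have h6b : r * (ρ * (N:ℝ)^2 * Real.log N) = (c - ε / 2) * ((N:ℝ)^2 * Real.log N) := by
        rw [show r * (ρ * (N:ℝ)^2 * Real.log N) = (r * ρ) * ((N:ℝ)^2 * Real.log N) from by ring,
          hrρ]
      linarith [h6a, h6b]
    have h7 : r * (N:ℝ)^2 ≤ ε / 2 * ((N:ℝ)^2 * Real.log N) := by
      have h4 : 2 * r ≤ ε * Real.log N := by
        rw [div_le_iff₀ hε] at hlogN; linarith
      have h7a : (0:ℝ) ≤ (ε * Real.log N - 2 * r) * (N:ℝ)^2 :=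
        mul_nonneg (by linarith) (sq_nonneg _)
      have e : (ε * Real.log N - 2 * r) * (N:ℝ)^2
          = 2 * (ε / 2 * ((N:ℝ)^2 * Real.log N)) - 2 * (r * (N:ℝ)^2) := by ring
      linarith [h7a, e]
    linarith [h5, h6, h7]
  · -- d < s
    have hsne : s ≠ (d : ℝ) := ne_of_gt hsd
    have htau : ∀ n : ℕ, tauNorm s d n = (n : ℝ) ^ (1 + s / (d:ℝ)) := fun n => if_neg hsne
    set p := 1 + s / (d:ℝ) with hpdef
    have hp0 : 0 < p := by simp only [hpdef]; linarith
    set ρ := (c - ε) / r with hρdef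
    have hρ0 : 0 < ρ := div_pos hce hr
    have hρ1 : ρ < 1 := (div_lt_one hr).2 (by linarith)
    set θ := ρ ^ (1 / p) with hθdef
    have hθ0 : 0 < θ := Real.rpow_pos_of_pos hρ0 _
    have hθ1 : θ < 1 := Real.rpow_lt_one hρ0.le hρ1 (by positivity)
    have hθp : θ ^ p = ρ := by
      rw [hθdef, ← Real.rpow_mul hρ0.le, one_div_mul_cancel hp0.ne', Real.rpow_one]
    obtain ⟨n₀, hn₀⟩ := exists_nat_ge ((M : ℝ) / (1 - θ))
    filter_upwards [eventually_ge_atTop (max n₀ M)] with N hN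
    have hNM : M ≤ N := le_trans (le_max_right _ _) hN
    have hN1 : (M : ℝ) / (1 - θ) ≤ N := hn₀.trans (Nat.cast_le.2 (le_trans (le_max_left _ _) hN))
    have hcastNM : ((N - M : ℕ) : ℝ) = (N : ℝ) - M := Nat.cast_sub hNM
    have hθN : θ * N ≤ ((N - M : ℕ) : ℝ) := by
      rw [hcastNM]
      rw [div_le_iff₀ (by linarith : (0:ℝ) < 1 - θ)] at hN1
      nlinarith
    rw [htau, htau]
    have h1 : (θ * N) ^ p ≤ ((N - M : ℕ) : ℝ) ^ p :=
      Real.rpow_le_rpow (by positivity) hθN hp0.le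
    rw [Real.mul_rpow hθ0.le (Nat.cast_nonneg N), hθp] at h1
    have h2 := mul_le_mul_of_nonneg_left h1 hr.le
    have hrρ : r * ρ = c - ε := by
      rw [hρdef, mul_comm, div_mul_cancel₀ _ hr.ne']
    calc (c - ε) * (N:ℝ) ^ p = r * (ρ * (N:ℝ) ^ p) := by rw [← mul_assoc, hrρ]
      _ ≤ r * ((N - M : ℕ) : ℝ) ^ p := h2
end CoreAux

lemma riesz_engine {E : Type*} [PseudoEMetricSpace E] {d : ℕ} (hd : 1 ≤ d) {s : ℝ}
    (hs : (d : ℝ) ≤ s) (A B : Set E) {a b : ℝ} (ha : 0 < a) (hb : 0 < b)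
    (hlA : ENNReal.ofReal a <
      atTop.liminf fun N : ℕ => minRieszEnergy s A N / ENNReal.ofReal (tauNorm s d N))
    (hlB : ENNReal.ofReal b <
      atTop.liminf fun N : ℕ => minRieszEnergy s B N / ENNReal.ofReal (tauNorm s d N)) :
    ENNReal.ofReal ((a ^ (-(1 / (s / (d : ℝ)))) + b ^ (-(1 / (s / (d : ℝ)))))
        ^ (-(s / (d : ℝ)))) ≤
      atTop.liminf fun N : ℕ => minRieszEnergy s (A ∪ B) N / ENNReal.ofReal (tauNorm s d N) := by
  have hd0 : (0:ℝ) < d := by exact_mod_cast hd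
  have hσ1 : 1 ≤ s / (d : ℝ) := (one_le_div hd0).2 hs
  have hσ0 : 0 < s / (d : ℝ) := lt_of_lt_of_le one_pos hσ1
  set c := (a ^ (-(1 / (s / (d : ℝ)))) + b ^ (-(1 / (s / (d : ℝ))))) ^ (-(s / (d : ℝ)))
    with hcdef
  have hca : c ≤ a := riesz_c_le_left hσ0 ha hb
  have hcb : c ≤ b := riesz_c_le_right hσ0 ha hb
  set L := atTop.liminf fun N : ℕ =>
    minRieszEnergy s (A ∪ B) N / ENNReal.ofReal (tauNorm s d N) with hLdef
  -- main step : for any positive real ε, ofReal (c - ε) ≤ L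
  have main : ∀ ε : ℝ, 0 < ε → ENNReal.ofReal (c - ε) ≤ L := by
    intro ε hε
    by_cases hce : c - ε ≤ 0
    · simp [ENNReal.ofReal_eq_zero.2 hce]
    push_neg at hce
    -- eventual lower bounds for A and B
    have hevA := eventually_lt_of_lt_liminf hlA
    have hevB := eventually_lt_of_lt_liminf hlB
    obtain ⟨M₀, hM₀⟩ := eventually_atTop.1 (hevA.and hevB)
    set M := max M₀ 2 with hMdef
    have key : ∀ (C : Set E) (x : ℝ), 0 < x →
        (∀ n, M₀ ≤ n → ENNReal.ofReal x <
          minRieszEnergy s C n / ENNReal.ofReal (tauNorm s d n)) →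
        ∀ n, M ≤ n → ENNReal.ofReal (x * tauNorm s d n) ≤ minRieszEnergy s C n := by
      intro C x hx hex n hn
      have h2n : 2 ≤ n := le_trans (le_max_right _ _) hn
      have hτ : 0 < tauNorm s d n := tauNorm_pos h2n
      have hlt := (hex n (le_trans (le_max_left _ _) hn)).le
      have hmul := (ENNReal.le_div_iff_mul_le
        (Or.inl ((ENNReal.ofReal_pos.2 hτ).ne')) (Or.inl ENNReal.ofReal_ne_top)).1 hlt
      rwa [← ENNReal.ofReal_mul hx.le] at hmul
    have hMa : ∀ n, M ≤ n → ENNReal.ofReal (a * tauNorm s d n) ≤ minRieszEnergy s A n :=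
      key A a ha fun n hn => (hM₀ n hn).1
    have hMb : ∀ n, M ≤ n → ENNReal.ofReal (b * tauNorm s d n) ≤ minRieszEnergy s B n :=
      key B b hb fun n hn => (hM₀ n hn).2
    have hcore1 := riesz_core1 hd hs ha hb hε
    have hcore2a := riesz_core2 hd hs ha hca hε M
    have hcore2b := riesz_core2 hd hs hb hcb hε M
    rw [hLdef]
    refine le_liminf_of_le (by isBoundedDefault) ?_
    filter_upwards [hcore1, hcore2a, hcore2b, eventually_ge_atTop (2 * M + 2)]
      with N h1 h2a h2b hNM
    have h2N : 2 ≤ N := by omega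
    have hτN : 0 < tauNorm s d N := tauNorm_pos h2N
    rw [ENNReal.le_div_iff_mul_le (Or.inl ((ENNReal.ofReal_pos.2 hτN).ne'))
      (Or.inl ENNReal.ofReal_ne_top), ← ENNReal.ofReal_mul hce.le]
    refine le_minRieszEnergy_union s A B N _ fun k hk => ?_
    by_cases hkM : k < M
    · -- A part negligible, use B
      have hj1 : N - M ≤ N - k := by omega
      have hjM : M ≤ N - k := by omega
      calc ENNReal.ofReal ((c - ε) * tauNorm s d N)
          ≤ ENNReal.ofReal (b * tauNorm s d (N - k)) :=
            ENNReal.ofReal_le_ofReal (h2b (N - k) hj1 (Nat.sub_le _ _))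
        _ ≤ minRieszEnergy s B (N - k) := hMb _ hjM
        _ ≤ minRieszEnergy s A k + minRieszEnergy s B (N - k) := le_add_self
    by_cases hkM2 : N - k < M
    · -- B part negligible, use A
      have hj1 : N - M ≤ k := by omega
      have hjM : M ≤ k := by omega
      calc ENNReal.ofReal ((c - ε) * tauNorm s d N)
          ≤ ENNReal.ofReal (a * tauNorm s d k) :=
            ENNReal.ofReal_le_ofReal (h2a k hj1 hk)
        _ ≤ minRieszEnergy s A k := hMa _ hjM
        _ ≤ minRieszEnergy s A k + minRieszEnergy s B (N - k) := le_self_add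
    · push_neg at hkM hkM2
      calc ENNReal.ofReal ((c - ε) * tauNorm s d N)
          ≤ ENNReal.ofReal (a * tauNorm s d k + b * tauNorm s d (N - k)) :=
            ENNReal.ofReal_le_ofReal (h1 k hk)
        _ = ENNReal.ofReal (a * tauNorm s d k) + ENNReal.ofReal (b * tauNorm s d (N - k)) :=
            ENNReal.ofReal_add (mul_nonneg ha.le (tauNorm_nonneg s d k))
              (mul_nonneg hb.le (tauNorm_nonneg s d _))
        _ ≤ minRieszEnergy s A k + minRieszEnergy s B (N - k) :=
            add_le_add (hMa _ hkM) (hMb _ hkM2)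
  -- conclude
  refine ENNReal.le_of_forall_pos_le_add fun ε hε _ => ?_
  have hε' : (0:ℝ) < ε := hε
  calc ENNReal.ofReal c = ENNReal.ofReal ((c - ε) + ε) := by rw [sub_add_cancel]
    _ ≤ ENNReal.ofReal (c - ε) + ENNReal.ofReal ε := ENNReal.ofReal_add_le
    _ ≤ L + ε := add_le_add (main ε hε') (by rw [ENNReal.ofReal_coe_nnreal])


-- ENNReal helper : strict antitonicity of x ↦ x ^ (-z) for z > 0
lemma ennreal_rpow_neg_lt {x y : ℝ≥0∞} {z : ℝ} (hz : 0 < z) (hxy : x < y) :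
    y ^ (-z) < x ^ (-z) := by
  rw [ENNReal.rpow_neg, ENNReal.rpow_neg, ENNReal.inv_lt_inv]
  exact ENNReal.rpow_lt_rpow hxy hz

/-- lower bound for the lim inf of the normalized minimal energy of a union of
two bounded sets, with `ENNReal` rpow conventions at `0` and `∞`. -/
theorem liminf_union_ge (d d' : ℕ) (hd : 1 ≤ d) (hdd : d ≤ d') (s : ℝ) (hs : (d : ℝ) ≤ s)
    (A B : Set (EuclideanSpace ℝ (Fin d')))
    (hA : Bornology.IsBounded A) (hB : Bornology.IsBounded B) :
    ((atTop.liminf fun N : ℕ =>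
        minRieszEnergy s A N / ENNReal.ofReal (tauNorm s d N)) ^ (-(d : ℝ) / s) +
      (atTop.liminf fun N : ℕ =>
        minRieszEnergy s B N / ENNReal.ofReal (tauNorm s d N)) ^ (-(d : ℝ) / s))
        ^ (-(s / (d : ℝ))) ≤
      atTop.liminf fun N : ℕ =>
        minRieszEnergy s (A ∪ B) N / ENNReal.ofReal (tauNorm s d N) := by
  have hd0 : (0:ℝ) < d := by exact_mod_cast hd
  have hs0 : (0:ℝ) < s := lt_of_lt_of_le hd0 hs
  have hδ0 : 0 < (d : ℝ) / s := div_pos hd0 hs0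
  have hσ0 : 0 < s / (d : ℝ) := div_pos hs0 hd0
  have hδσ : -((d:ℝ)/s) * -(s/(d:ℝ)) = 1 := by field_simp
  have hσδ : -(s/(d:ℝ)) * -((d:ℝ)/s) = 1 := by field_simp
  simp only [neg_div]
  set gA := atTop.liminf fun N : ℕ =>
    minRieszEnergy s A N / ENNReal.ofReal (tauNorm s d N) with hgA
  set gB := atTop.liminf fun N : ℕ =>
    minRieszEnergy s B N / ENNReal.ofReal (tauNorm s d N) with hgB
  set L := atTop.liminf fun N : ℕ =>
    minRieszEnergy s (A ∪ B) N / ENNReal.ofReal (tauNorm s d N) with hL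
  by_contra hcon
  push_neg at hcon
  obtain ⟨r, hrL, hrR⟩ := exists_between hcon
  have hr0 : 0 < r := lt_of_le_of_lt (zero_le : (0:ℝ≥0∞) ≤ L) hrL
  have hrtop : r ≠ ⊤ := hrR.ne_top
  -- unfold the inequality r < R
  have hT : gA ^ (-((d:ℝ)/s)) + gB ^ (-((d:ℝ)/s)) < r ^ (-((d:ℝ)/s)) := by
    have h1 := ennreal_rpow_neg_lt hδ0 hrR
    rwa [← ENNReal.rpow_mul, hσδ, ENNReal.rpow_one] at h1
  have hρ_top : r ^ (-((d:ℝ)/s)) ≠ ⊤ := by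
    rw [ENNReal.rpow_neg]
    exact ENNReal.inv_ne_top.2 (ENNReal.rpow_pos hr0 hrtop).ne'
  have hρ0 : 0 < r ^ (-((d:ℝ)/s)) := by
    rw [ENNReal.rpow_neg]
    exact ENNReal.inv_pos.2 (ENNReal.rpow_ne_top_of_nonneg hδ0.le hrtop)
  have hA_ne : gA ^ (-((d:ℝ)/s)) ≠ ⊤ := (le_self_add.trans_lt hT).ne_top
  have hB_ne : gB ^ (-((d:ℝ)/s)) ≠ ⊤ := (le_add_self.trans_lt hT).ne_top
  set x := (gA ^ (-((d:ℝ)/s))).toReal with hx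
  set y := (gB ^ (-((d:ℝ)/s))).toReal with hy
  set ρ := (r ^ (-((d:ℝ)/s))).toReal with hρ
  have hxyρ : x + y < ρ := by
    rw [hx, hy, hρ, ← ENNReal.toReal_add hA_ne hB_ne]
    exact (ENNReal.toReal_lt_toReal hT.ne_top hρ_top).2 hT
  have hρpos : 0 < ρ := ENNReal.toReal_pos hρ0.ne' hρ_top
  have hx0 : 0 ≤ x := ENNReal.toReal_nonneg
  have hy0 : 0 ≤ y := ENNReal.toReal_nonneg
  set η := (ρ - (x + y)) / 3 with hη
  have hη0 : 0 < η := by rw [hη]; linarith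
  set u := x + η with hu
  set v := y + η with hv
  have hu0 : 0 < u := by rw [hu]; linarith
  have hv0 : 0 < v := by rw [hv]; linarith
  have huvρ : u + v < ρ := by rw [hu, hv, hη]; linarith
  -- roundtrip for real rpow
  have hrt2 : ∀ w : ℝ, 0 < w → (w ^ (-(s/(d:ℝ)))) ^ (-(1/(s/(d:ℝ)))) = w := by
    intro w hw
    rw [← Real.rpow_mul hw.le, neg_mul_neg, mul_one_div, div_self hσ0.ne', Real.rpow_one]
  have ha : 0 < u ^ (-(s/(d:ℝ))) := Real.rpow_pos_of_pos hu0 _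
  have hb : 0 < v ^ (-(s/(d:ℝ))) := Real.rpow_pos_of_pos hv0 _
  -- strict bounds against the liminfs
  have hlA : ENNReal.ofReal (u ^ (-(s/(d:ℝ)))) < gA := by
    have h1 : gA ^ (-((d:ℝ)/s)) < ENNReal.ofReal u := by
      rw [show gA ^ (-((d:ℝ)/s)) = ENNReal.ofReal x from (ENNReal.ofReal_toReal hA_ne).symm]
      exact (ENNReal.ofReal_lt_ofReal_iff hu0).2 (by rw [hu]; linarith)
    have h2 := ennreal_rpow_neg_lt hσ0 h1
    rwa [← ENNReal.rpow_mul, hδσ, ENNReal.rpow_one,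
      ENNReal.ofReal_rpow_of_pos hu0] at h2
  have hlB : ENNReal.ofReal (v ^ (-(s/(d:ℝ)))) < gB := by
    have h1 : gB ^ (-((d:ℝ)/s)) < ENNReal.ofReal v := by
      rw [show gB ^ (-((d:ℝ)/s)) = ENNReal.ofReal y from (ENNReal.ofReal_toReal hB_ne).symm]
      exact (ENNReal.ofReal_lt_ofReal_iff hv0).2 (by rw [hv]; linarith)
    have h2 := ennreal_rpow_neg_lt hσ0 h1
    rwa [← ENNReal.rpow_mul, hδσ, ENNReal.rpow_one,
      ENNReal.ofReal_rpow_of_pos hv0] at h2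
  -- apply the engine
  have hfin := riesz_engine hd hs A B ha hb hlA hlB
  rw [hrt2 u hu0, hrt2 v hv0] at hfin
  -- r < ofReal ((u+v) ^ (-(s/d)))
  have h4 : ENNReal.ofReal (u + v) < r ^ (-((d:ℝ)/s)) := by
    rw [← ENNReal.ofReal_toReal hρ_top]
    exact (ENNReal.ofReal_lt_ofReal_iff hρpos).2 huvρ
  have h5 := ennreal_rpow_neg_lt hσ0 h4
  rw [← ENNReal.rpow_mul, hδσ, ENNReal.rpow_one,
    ENNReal.ofReal_rpow_of_pos (by linarith : (0:ℝ) < u + v)] at h5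
  exact absurd (h5.le.trans hfin) (not_le.2 hrL)
end
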